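/- arXiv:2101.01744 — 3 statements merged into one kernel-verified Lean document; each statement's English description precedes it below -/
import Mathlib

section
/- For every z₀ ∈ ℂ \ ℝ and every x ∈ ℝ ∪ {∞}, there exists t ∈ ℝ ∪ {∞} such that the function z ↦ |(z−t)(x−z₀)/((z−z₀)(x−t))| on ℝ ∪ {∞} has maximum value 1, attained uniquely at z = x. -/
noncomputable section
open Polynomial Filter Set MeasureTheory
open scoped Classical


/-- The absolute value of the cross ratio `(z-t)(x-z₀)/((z-z₀)(x-t))` of points
`z, t, x ∈ ℝ ∪ {∞}` and `z₀ ∈ ℂ`, with the usual conventions at `∞`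
(factors containing `∞` cancel). -/
def crossAbs (z0 : ℂ) (x t z : OnePoint ℝ) : ℝ :=
  Option.casesOn x
    (Option.casesOn t 1 (fun tv => Option.casesOn z 1
      (fun zv => ‖((zv : ℂ) - tv) / ((zv : ℂ) - z0)‖)))
    (fun xv => Option.casesOn t
      (Option.casesOn z 0 (fun zv => ‖((xv : ℂ) - z0) / ((zv : ℂ) - z0)‖))
      (fun tv => Option.casesOn z
        (‖((xv : ℂ) - z0) / ((xv : ℂ) - tv)‖)
        (fun zv => ‖(((zv : ℂ) - tv) * ((xv : ℂ) - z0)) /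
          (((zv : ℂ) - z0) * ((xv : ℂ) - tv))‖)))

private lemma absDivLeOne {w v : ℂ} (hv : v ≠ 0) (h : Complex.normSq w ≤ Complex.normSq v) :
    ‖w / v‖ ≤ 1 := by
  rw [norm_div, div_le_one (norm_pos_iff.mpr hv)]
  rw [Complex.norm_def, Complex.norm_def]
  exact Real.sqrt_le_sqrt h

private lemma absDivEqOne {w v : ℂ} (hv : v ≠ 0) (h : ‖w / v‖ = 1) :
    Complex.normSq w = Complex.normSq v := by
  rw [norm_div, div_eq_one_iff_eq (norm_ne_zero_iff.mpr hv)] at h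
  have := congrArg (· ^ 2) h
  simpa [Complex.sq_norm] using this

private lemma normSqSubReal (z0 : ℂ) (zv : ℝ) :
    Complex.normSq ((zv:ℂ) - z0) = (zv - z0.re)^2 + z0.im^2 := by
  simp [Complex.normSq_apply, Complex.sub_re, Complex.sub_im]
  ring

private lemma normSqSubReal' (a b : ℝ) : Complex.normSq ((a:ℂ) - b) = (a - b)^2 := by
  simp [Complex.normSq_apply]
  ring

private lemma subRealNeZero (z0 : ℂ) (hz0 : z0.im ≠ 0) (zv : ℝ) : (zv:ℂ) - z0 ≠ 0 := by
  intro h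
  apply hz0
  have := congrArg Complex.im h
  simpa using this.symm

/-- For every `z₀ ∈ ℂ \ ℝ` and every `x ∈ ℝ ∪ {∞}` there is `t ∈ ℝ ∪ {∞}` such that
`z ↦ |(z-t)(x-z₀)/((z-z₀)(x-t))|` has maximum `1` on `ℝ ∪ {∞}`, attained only at `z = x`. -/
theorem crossratio_max (z0 : ℂ) (hz0 : z0.im ≠ 0) (x : OnePoint ℝ) :
    ∃ t : OnePoint ℝ,
      (∀ z : OnePoint ℝ, crossAbs z0 x t z ≤ 1) ∧
      crossAbs z0 x t x = 1 ∧
      (∀ z : OnePoint ℝ, crossAbs z0 x t z = 1 → z = x) := by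
  set a := z0.re with ha
  set b := z0.im with hb
  have hb2 : 0 < b^2 := by positivity
  cases x with
  | infty =>
    -- take t = Re z₀
    refine ⟨(a : OnePoint ℝ), ?_, ?_, ?_⟩
    · intro z
      cases z with
      | infty => exact le_refl 1
      | coe zv =>
        show ‖((zv:ℂ) - a) / ((zv:ℂ) - z0)‖ ≤ 1
        refine absDivLeOne (subRealNeZero z0 hz0 zv) ?_
        rw [normSqSubReal', normSqSubReal]
        nlinarith
    · exact rfl
    · intro z hz
      cases z with
      | infty => rfl
      | coe zv =>
        exfalso
        have := absDivEqOne (subRealNeZero z0 hz0 zv) hz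
        rw [normSqSubReal', normSqSubReal] at this
        nlinarith
  | coe xv =>
    have hx0 : (xv:ℂ) - z0 ≠ 0 := subRealNeZero z0 hz0 xv
    by_cases hxa : xv = a
    · -- x is the real part of z₀ : take t = ∞
      refine ⟨OnePoint.infty, ?_, ?_, ?_⟩
      · intro z
        cases z with
        | infty => exact zero_le_one
        | coe zv =>
          show ‖((xv:ℂ) - z0) / ((zv:ℂ) - z0)‖ ≤ 1
          refine absDivLeOne (subRealNeZero z0 hz0 zv) ?_
          rw [normSqSubReal, normSqSubReal]
          nlinarith [sq_nonneg (zv - z0.re), hxa]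
      · show ‖((xv:ℂ) - z0) / ((xv:ℂ) - z0)‖ = 1
        rw [div_self hx0]
        simp
      · intro z hz
        cases z with
        | infty =>
          exfalso
          have h0 : (0:ℝ) = 1 := hz
          norm_num at h0
        | coe zv =>
          have h1 := absDivEqOne (subRealNeZero z0 hz0 zv) hz
          rw [normSqSubReal, normSqSubReal] at h1
          have : zv = a := by nlinarith [sq_nonneg (zv - z0.re)]
          rw [this, ← hxa]
    · -- generic case
      have hd : xv - a ≠ 0 := sub_ne_zero.mpr hxa
      have hd2 : 0 < (xv - a)^2 := by positivity
      set tv : ℝ := (a * xv - a^2 - b^2) / (xv - a) with htv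
      have key : (xv - tv) * (xv - a) = (xv - a)^2 + b^2 := by
        rw [htv]; field_simp; ring
      have hxt : xv - tv ≠ 0 := by
        intro h
        rw [h, zero_mul] at key
        nlinarith
      have hxtC : (xv:ℂ) - (tv:ℂ) ≠ 0 := by
        intro h
        apply hxt
        have := congrArg Complex.re h
        simpa using this
      have hident : ∀ zv : ℝ,
          ((zv - a)^2 + b^2) * (xv - tv)^2 - (zv - tv)^2 * ((xv - a)^2 + b^2)
            = b^2 * ((xv - a)^2 + b^2) * (zv - xv)^2 / (xv - a)^2 := by
        intro zv
        rw [htv]; field_simp; ring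
      refine ⟨(tv : OnePoint ℝ), ?_, ?_, ?_⟩
      · intro z
        cases z with
        | infty =>
          show ‖((xv:ℂ) - z0) / ((xv:ℂ) - tv)‖ ≤ 1
          refine absDivLeOne hxtC ?_
          rw [normSqSubReal', normSqSubReal]
          nlinarith [key, sq_nonneg b, sq_nonneg (xv - a)]
        | coe zv =>
          show ‖(((zv:ℂ) - tv) * ((xv:ℂ) - z0)) /
              (((zv:ℂ) - z0) * ((xv:ℂ) - tv))‖ ≤ 1
          refine absDivLeOne (mul_ne_zero (subRealNeZero z0 hz0 zv) hxtC) ?_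
          rw [map_mul, map_mul, normSqSubReal' zv tv, normSqSubReal' xv tv, normSqSubReal, normSqSubReal]
          have h2 := hident zv
          have h3 : 0 ≤ b^2 * ((xv - a)^2 + b^2) * (zv - xv)^2 / (xv - a)^2 := by positivity
          nlinarith
      · show ‖(((xv:ℂ) - tv) * ((xv:ℂ) - z0)) /
            (((xv:ℂ) - z0) * ((xv:ℂ) - tv))‖ = 1
        rw [mul_comm ((xv:ℂ) - z0), div_self (mul_ne_zero hxtC hx0)]
        simp
      · intro z hz
        cases z with
        | infty =>
          exfalso
          have h1 := absDivEqOne hxtC hz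
          rw [normSqSubReal' xv tv, normSqSubReal] at h1
          nlinarith [key]
        | coe zv =>
          have h1 := absDivEqOne (mul_ne_zero (subRealNeZero z0 hz0 zv) hxtC) hz
          rw [map_mul, map_mul, normSqSubReal' zv tv, normSqSubReal' xv tv,
            normSqSubReal, normSqSubReal] at h1
          have h2 := hident zv
          have h3 : b^2 * ((xv - a)^2 + b^2) * (zv - xv)^2 / (xv - a)^2 = 0 := by
            nlinarith
          have h4 : (zv - xv)^2 = 0 := by
            by_contra h5
            have : 0 < (zv - xv)^2 := lt_of_le_of_ne (sq_nonneg _) (Ne.symm h5)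
            have : 0 < b^2 * ((xv - a)^2 + b^2) * (zv - xv)^2 / (xv - a)^2 := by positivity
            linarith
          have : zv = xv := by nlinarith [h4]
          rw [this]

end
end

section
/- Let E ⊂ ℝ be compact with infinitely many points, n ≥ 1, poles c₁,…,cₙ ∈ ℝ̄ \ E determining the space L_n of rational functions P/R_n with deg P ≤ n and R_n = ∏_{c_k ≠ ∞}(z − c_k), and let x_* = ∞. If F_n ∈ L_n is an extremal function for the problem of maximizing the real part of the leading coefficient subject to sup_E |F_n| ≤ 1, then every generalized zero of F_n is real: F_n has no zeros in ℂ \ ℝ and at every nonreal point the pole order of F_n equals its maximal allowed order. -/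
noncomputable section
open Polynomial Filter Set MeasureTheory
open scoped Classical


abbrev Sph := OnePoint ℂ
abbrev RLine := OnePoint ℝ

/-- Embedding of the extended real line into the Riemann sphere. -/
def embR : RLine → Sph := Option.map Complex.ofReal

/-- Order of vanishing of a rational function at a point of the sphere
(negative at poles); junk value for `F = 0`. -/
def ordAt (F : RatFunc ℂ) (x : Sph) : ℤ :=
  Option.casesOn x ((F.denom.natDegree : ℤ) - F.num.natDegree)
    (fun z => (F.num.rootMultiplicity z : ℤ) - F.denom.rootMultiplicity z)

/-- Evaluation at a finite point, with junk value `0` at poles. -/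
def evalC (F : RatFunc ℂ) (z : ℂ) : ℂ := F.num.eval z / F.denom.eval z

/-- Sphere-valued evaluation of a rational function on the Riemann sphere. -/
def evalSph (F : RatFunc ℂ) (x : Sph) : Sph :=
  Option.casesOn x
    (if F.denom.natDegree < F.num.natDegree then none
     else some (if F.num.natDegree = F.denom.natDegree then
        F.num.leadingCoeff / F.denom.leadingCoeff else 0))
    (fun z => if F.denom.eval z = 0 then none else some (F.num.eval z / F.denom.eval z))

/-- Evaluation at a point of the extended real line (junk `0` at poles). -/
def evalPt (F : RatFunc ℂ) (x : RLine) : ℂ := (evalSph F (embR x)).getD 0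

/-- The pole divisor `D_n^∞` determined by the prescribed list of poles. -/
def polesDiv {n : ℕ} (c : Fin n → RLine) (x : Sph) : ℕ :=
  (Finset.univ.filter (fun k => embR (c k) = x)).card

/-- `F ∈ L(D_n^∞)`: the polar divisor of `F` is bounded by the prescribed divisor. -/
def MemL {n : ℕ} (c : Fin n → RLine) (F : RatFunc ℂ) : Prop :=
  ∀ x : Sph, (-(ordAt F x)).toNat ≤ polesDiv c x

/-- `lim_{x → x_*} F(x) / r(x,x_*)^d`, the "leading coefficient" of `F` at `x_*`. -/
def leadVal (F : RatFunc ℂ) (xs : RLine) (d : ℕ) : ℂ :=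
  Option.casesOn xs
    ((evalSph (F / RatFunc.X ^ d) none).getD 0)
    (fun r => (evalSph (F * (RatFunc.C (r : ℂ) - RatFunc.X) ^ d) (some (r : ℂ))).getD 0)

/-- `sup_E |F| ≤ 1`. -/
def UnitBdd (E : Set RLine) (F : RatFunc ℂ) : Prop :=
  ∀ x ∈ E, ‖evalPt F x‖ ≤ 1

/-- `F` solves the rational Chebyshev/residual extremal problem on `E` with poles `c`
and extremal point `xs`. -/
def IsExtremal {n : ℕ} (E : Set RLine) (c : Fin n → RLine) (xs : RLine) (F : RatFunc ℂ) : Prop :=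
  MemL c F ∧ UnitBdd E F ∧
  ∀ G : RatFunc ℂ, MemL c G → UnitBdd E G →
    (leadVal G xs (polesDiv c (embR xs))).re ≤ (leadVal F xs (polesDiv c (embR xs))).re

/-- Generalized zero divisor `D_n^0 = (F) + D_n^∞`. -/
def Dn0 {n : ℕ} (c : Fin n → RLine) (F : RatFunc ℂ) (x : Sph) : ℤ :=
  ordAt F x + polesDiv c x

/-- A rational function is real if it commutes with complex conjugation. -/
def RealRF (F : RatFunc ℂ) : Prop :=
  ∀ z : ℂ, evalC F (starRingEnd ℂ z) = starRingEnd ℂ (evalC F z)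


abbrev aM : ℂ[X] →+* RatFunc ℂ := algebraMap ℂ[X] (RatFunc ℂ)

lemma cross (p q : ℂ[X]) (hq : q ≠ 0) :
    (aM p / aM q).num * q = p * (aM p / aM q).denom :=
  (RatFunc.num_mul_eq_mul_denom_iff hq).mpr rfl

lemma Hne (p q : ℂ[X]) (hp : p ≠ 0) (hq : q ≠ 0) : aM p / aM q ≠ 0 :=
  div_ne_zero (RatFunc.algebraMap_ne_zero hp) (RatFunc.algebraMap_ne_zero hq)

lemma ord_fin (p q : ℂ[X]) (hp : p ≠ 0) (hq : q ≠ 0) (w : ℂ) :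
    ordAt (aM p / aM q) (some w) = (p.rootMultiplicity w : ℤ) - q.rootMultiplicity w := by
  show ((aM p / aM q).num.rootMultiplicity w : ℤ) - (aM p / aM q).denom.rootMultiplicity w = _
  have h := cross p q hq
  have hn : (aM p / aM q).num ≠ 0 := RatFunc.num_ne_zero (Hne p q hp hq)
  have hd : (aM p / aM q).denom ≠ 0 := RatFunc.denom_ne_zero _
  have h2 := congrArg (Polynomial.rootMultiplicity w) h
  rw [Polynomial.rootMultiplicity_mul (mul_ne_zero hn hq),
      Polynomial.rootMultiplicity_mul (mul_ne_zero hp hd)] at h2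
  omega

lemma ord_inf (p q : ℂ[X]) (hp : p ≠ 0) (hq : q ≠ 0) :
    ordAt (aM p / aM q) none = (q.natDegree : ℤ) - p.natDegree := by
  show ((aM p / aM q).denom.natDegree : ℤ) - (aM p / aM q).num.natDegree = _
  have h := cross p q hq
  have hn : (aM p / aM q).num ≠ 0 := RatFunc.num_ne_zero (Hne p q hp hq)
  have hd : (aM p / aM q).denom ≠ 0 := RatFunc.denom_ne_zero _
  have h2 := congrArg Polynomial.natDegree h
  rw [Polynomial.natDegree_mul hn hq, Polynomial.natDegree_mul hp hd] at h2
  omega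

lemma denom_eval_ne (p q : ℂ[X]) (w : ℂ) (hq : q.eval w ≠ 0) :
    (aM p / aM q).denom.eval w ≠ 0 := by
  have hq0 : q ≠ 0 := fun h => hq (h ▸ by simp)
  obtain ⟨u, hu⟩ := (RatFunc.denom_dvd (x := aM p / aM q) hq0).mpr ⟨p, rfl⟩
  intro h0
  exact hq (by rw [hu, Polynomial.eval_mul, h0, zero_mul])

lemma evalSph_fin (p q : ℂ[X]) (w : ℂ) (hq : q.eval w ≠ 0) :
    evalSph (aM p / aM q) (some w) = some (p.eval w / q.eval w) := by
  have hq0 : q ≠ 0 := fun h => hq (h ▸ by simp)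
  have hd := denom_eval_ne p q w hq
  show (if (aM p / aM q).denom.eval w = 0 then none
    else some ((aM p / aM q).num.eval w / (aM p / aM q).denom.eval w)) = _
  rw [if_neg hd]
  congr 1
  have h := congrArg (Polynomial.eval w) (cross p q hq0)
  rw [Polynomial.eval_mul, Polynomial.eval_mul] at h
  rw [div_eq_div_iff hd hq]
  linear_combination h

lemma evalSph_inf (p q : ℂ[X]) (hp : p ≠ 0) (hq : q ≠ 0) :
    evalSph (aM p / aM q) none =
      if q.natDegree < p.natDegree then none
      else some (if p.natDegree = q.natDegree then p.leadingCoeff / q.leadingCoeff else 0) := by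
  have hn : (aM p / aM q).num ≠ 0 := RatFunc.num_ne_zero (Hne p q hp hq)
  have hd : (aM p / aM q).denom ≠ 0 := RatFunc.denom_ne_zero _
  have hdeg := congrArg Polynomial.natDegree (cross p q hq)
  rw [Polynomial.natDegree_mul hn hq, Polynomial.natDegree_mul hp hd] at hdeg
  have hlc := congrArg Polynomial.leadingCoeff (cross p q hq)
  rw [Polynomial.leadingCoeff_mul, Polynomial.leadingCoeff_mul] at hlc
  show (if (aM p / aM q).denom.natDegree < (aM p / aM q).num.natDegree then none
    else some (if (aM p / aM q).num.natDegree = (aM p / aM q).denom.natDegree then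
      (aM p / aM q).num.leadingCoeff / (aM p / aM q).denom.leadingCoeff else 0)) = _
  by_cases h1 : q.natDegree < p.natDegree
  · rw [if_pos (by omega), if_pos h1]
  · rw [if_neg (by omega), if_neg h1]
    congr 1
    by_cases h2 : p.natDegree = q.natDegree
    · rw [if_pos (by omega), if_pos h2,
        div_eq_div_iff (Polynomial.leadingCoeff_ne_zero.2 hd) (Polynomial.leadingCoeff_ne_zero.2 hq)]
      linear_combination hlc
    · rw [if_neg (by omega), if_neg h2]


def polesPoly {n : ℕ} (c : Fin n → RLine) (k : Fin n) : ℂ[X] :=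
  Option.casesOn (c k) 1 (fun r => X - C (r : ℂ))

lemma polesPoly_none {n : ℕ} (c : Fin n → RLine) (k : Fin n) (h : c k = none) :
    polesPoly c k = 1 := by unfold polesPoly; rw [h]

lemma polesPoly_some {n : ℕ} (c : Fin n → RLine) (k : Fin n) (r : ℝ) (h : c k = some r) :
    polesPoly c k = X - C (r : ℂ) := by unfold polesPoly; rw [h]

lemma embR_none : embR (none : RLine) = none := rfl
lemma embR_some (r : ℝ) : embR (some r : RLine) = some (r : ℂ) := rfl

lemma rootMult_prod {α : Type*} (s : Finset α) (f : α → ℂ[X]) (hf : ∀ k ∈ s, f k ≠ 0) (w : ℂ) :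
    (∏ k ∈ s, f k).rootMultiplicity w = ∑ k ∈ s, (f k).rootMultiplicity w := by
  classical
  induction s using Finset.induction_on with
  | empty =>
    rw [Finset.prod_empty, Finset.sum_empty, ← Polynomial.C_1, Polynomial.rootMultiplicity_C]
  | @insert a s ha ih =>
    rw [Finset.prod_insert ha, Finset.sum_insert ha,
      Polynomial.rootMultiplicity_mul
        (mul_ne_zero (hf a (Finset.mem_insert_self a s))
          (Finset.prod_ne_zero_iff.mpr fun k hk => hf k (Finset.mem_insert_of_mem hk))),
      ih fun k hk => hf k (Finset.mem_insert_of_mem hk)]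

lemma lead_pos {n : ℕ} (E : Set ℝ) (hEc : IsCompact E) (hEne : E.Nonempty)
    (c : Fin n → RLine) (hc : ∀ k, c k ∉ (fun r : ℝ => (some r : RLine)) '' E)
    (F : RatFunc ℂ)
    (hF : IsExtremal ((fun r : ℝ => (some r : RLine)) '' E) c (none : RLine) F) :
    0 < (leadVal F none (polesDiv c none)).re := by
  set d := polesDiv c none with hd
  set q : Fin n → ℂ[X] := polesPoly c with hqdef
  have hqn : ∀ k, c k = none → q k = 1 := fun k h => polesPoly_none c k h
  have hqs : ∀ k r, c k = some r → q k = X - C (r : ℂ) := fun k r h => polesPoly_some c k r h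
  have hq_ne : ∀ k, q k ≠ 0 := by
    intro k
    rcases hck : c k with _ | r
    · rw [hqn k hck]; exact one_ne_zero
    · rw [hqs k r hck]; exact Polynomial.X_sub_C_ne_zero _
  have hq_monic : ∀ k, (q k).Monic := by
    intro k
    rcases hck : c k with _ | r
    · rw [hqn k hck]; exact Polynomial.monic_one
    · rw [hqs k r hck]; exact Polynomial.monic_X_sub_C _
  set R : ℂ[X] := ∏ k, q k with hRdef
  have hR : R ≠ 0 := Finset.prod_ne_zero_iff.mpr fun k _ => hq_ne k
  have hRmonic : R.Monic := Polynomial.monic_prod_of_monic _ _ fun k _ => hq_monic k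
  have hRdeg : R.natDegree + d = n := by
    have h1 : R.natDegree = ∑ k, (q k).natDegree := Polynomial.natDegree_prod _ _ fun k _ => hq_ne k
    have h3 : R.natDegree = (Finset.univ.filter (fun k : Fin n => ¬ embR (c k) = none)).card := by
      rw [h1, Finset.card_filter]
      apply Finset.sum_congr rfl
      intro k _
      rcases hck : c k with _ | r
      · rw [hqn k hck, if_neg (not_not_intro embR_none), Polynomial.natDegree_one]
      · rw [hqs k r hck, if_pos (by rw [embR_some]; exact fun hh => Option.some_ne_none _ hh),
          Polynomial.natDegree_X_sub_C]
    have h4 := Finset.card_filter_add_card_filter_not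
      (s := (Finset.univ : Finset (Fin n))) (p := fun k => embR (c k) = none)
    rw [Finset.card_univ, Fintype.card_fin] at h4
    rw [h3, hd]
    unfold polesDiv
    omega
  have hRmult : ∀ w : ℂ, R.rootMultiplicity w = polesDiv c (some w) := by
    intro w
    rw [hRdef, rootMult_prod _ _ (fun k _ => hq_ne k)]
    unfold polesDiv
    rw [Finset.card_filter]
    apply Finset.sum_congr rfl
    intro k _
    rcases hck : c k with _ | r
    · rw [hqn k hck, ← Polynomial.C_1, Polynomial.rootMultiplicity_C,
        if_neg (by rw [embR_none]; exact fun hh => Option.some_ne_none _ hh.symm)]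
    · rw [hqs k r hck, Polynomial.rootMultiplicity_X_sub_C, embR_some]
      by_cases h : w = (r : ℂ)
      · rw [if_pos h, if_pos (by rw [h])]
      · rw [if_neg h]; exact (if_neg (fun hh => h (Option.some_inj.mp hh).symm)).symm
  have hReval : ∀ r ∈ E, R.eval (r : ℂ) ≠ 0 := by
    intro r hr
    rw [hRdef, Polynomial.eval_prod]
    rw [Finset.prod_ne_zero_iff]
    intro k _
    rcases hck : c k with _ | s
    · rw [hqn k hck]; simp
    · rw [hqs k s hck]
      simp only [Polynomial.eval_sub, Polynomial.eval_X, Polynomial.eval_C, sub_ne_zero]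
      intro h
      have hsr : s = r := by exact_mod_cast h.symm
      exact hc k (by rw [hck, hsr]; exact ⟨r, hr, rfl⟩)
  set g : ℝ → ℝ := fun r => ‖(r : ℂ) ^ n‖ / ‖R.eval (r : ℂ)‖ with hgdef
  have hgc : ContinuousOn g E := by
    apply ContinuousOn.div
    · exact (continuous_norm.comp
        ((continuous_pow n).comp Complex.continuous_ofReal)).continuousOn
    · exact (continuous_norm.comp
        (R.continuous_aeval.comp Complex.continuous_ofReal)).continuousOn
    · intro r hr; exact norm_ne_zero_iff.mpr (hReval r hr)
  obtain ⟨r0, hr0, hmax⟩ := hEc.exists_isMaxOn hEne hgc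
  set M : ℝ := g r0 with hM
  have hM0 : 0 ≤ M := div_nonneg (norm_nonneg _) (norm_nonneg _)
  set ε : ℝ := (M + 1)⁻¹ with hε
  have hεpos : 0 < ε := by positivity
  set p0 : ℂ[X] := C (ε : ℂ) * X ^ n with hp0
  have hεC : (ε : ℂ) ≠ 0 := by exact_mod_cast hεpos.ne'
  have hp0ne : p0 ≠ 0 := mul_ne_zero (by simpa using hεC) (pow_ne_zero _ Polynomial.X_ne_zero)
  have hp0deg : p0.natDegree = n := by
    rw [hp0, Polynomial.natDegree_C_mul hεC, Polynomial.natDegree_X_pow]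
  have hp0lc : p0.leadingCoeff = (ε : ℂ) := by
    rw [hp0, Polynomial.leadingCoeff_mul, Polynomial.leadingCoeff_C,
      Polynomial.leadingCoeff_X_pow, mul_one]
  set G0 : RatFunc ℂ := aM p0 / aM R with hG0
  have hmem : MemL c G0 := by
    intro x
    cases x with
    | none =>
      rw [hG0, ord_inf _ _ hp0ne hR, hp0deg, Int.toNat_le]
      push_cast
      omega
    | some w =>
      rw [hG0, ord_fin _ _ hp0ne hR w, hRmult w, Int.toNat_le]
      push_cast
      omega
  have hub : UnitBdd ((fun r : ℝ => (some r : RLine)) '' E) G0 := by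
    rintro x ⟨r, hr, rfl⟩
    have he : evalPt G0 (some r) = p0.eval (r : ℂ) / R.eval (r : ℂ) := by
      show (evalSph G0 (some (r : ℂ))).getD 0 = _
      rw [hG0, evalSph_fin _ _ _ (hReval r hr), Option.getD_some]
    rw [he, norm_div]
    have habs : ‖p0.eval (r : ℂ)‖ = ε * ‖(r : ℂ) ^ n‖ := by
      rw [hp0]
      simp [abs_of_pos hεpos]
    rw [habs, mul_div_assoc]
    have h1 : ‖(r:ℂ)^n‖ / ‖R.eval (r:ℂ)‖ ≤ M := hmax hr
    calc ε * (‖(r:ℂ)^n‖ / ‖R.eval (r:ℂ)‖) ≤ ε * M :=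
          mul_le_mul_of_nonneg_left h1 hεpos.le
      _ ≤ 1 := by rw [hε, inv_mul_le_iff₀ (by linarith)]; linarith
  have hlead : leadVal G0 none d = (ε : ℂ) := by
    show (evalSph (G0 / RatFunc.X ^ d) none).getD 0 = _
    have hXd : (RatFunc.X : RatFunc ℂ) ^ d = aM (X ^ d) := by
      rw [map_pow, RatFunc.algebraMap_X]
    have hsplit : G0 / RatFunc.X ^ d = aM p0 / aM (R * X ^ d) := by
      rw [hG0, hXd, div_div, ← map_mul]
    have hRX : R * X ^ d ≠ 0 := mul_ne_zero hR (pow_ne_zero _ Polynomial.X_ne_zero)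
    have hRXdeg : (R * X ^ d).natDegree = n := by
      rw [Polynomial.natDegree_mul hR (pow_ne_zero _ Polynomial.X_ne_zero),
        Polynomial.natDegree_X_pow]
      omega
    rw [hsplit, evalSph_inf _ _ hp0ne hRX, hRXdeg, hp0deg]
    rw [if_neg (lt_irrefl n), if_pos rfl]
    rw [Option.getD_some, hp0lc, Polynomial.leadingCoeff_mul, Polynomial.leadingCoeff_X_pow,
      mul_one, hRmonic.leadingCoeff, div_one]
  have hext := hF.2.2 G0 hmem hub
  have hre : (leadVal G0 none (polesDiv c (embR none))).re = ε := by
    show (leadVal G0 none (polesDiv c none)).re = ε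
    rw [← hd, hlead, Complex.ofReal_re]
  rw [hre] at hext
  calc (0:ℝ) < ε := hεpos
    _ ≤ _ := hext

/-- Every generalized zero of the Chebyshev extremizer (extremal point `x_* = ∞`,
`E ⊂ ℝ` compact) is real: off the real line `F_n` has no zeros and no reduction of
pole order, i.e. `D_n^0` vanishes there. -/
theorem generalized_zeros_real
    {n : ℕ} (hn : 1 ≤ n) (E : Set ℝ) (hEc : IsCompact E) (hEinf : E.Infinite)
    (c : Fin n → RLine) (hc : ∀ k, c k ∉ (fun r : ℝ => (some r : RLine)) '' E)
    (F : RatFunc ℂ)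
    (hF : IsExtremal ((fun r : ℝ => (some r : RLine)) '' E) c (none : RLine) F) :
    ∀ z : ℂ, z.im ≠ 0 → Dn0 c F (some z) = 0 := by
  intro z him
  have hmem := hF.1
  have hpd : polesDiv c (some z) = 0 := by
    unfold polesDiv
    rw [Finset.card_eq_zero, Finset.filter_eq_empty_iff]
    intro k _
    rcases hck : c k with _ | r
    · rw [embR_none]; exact fun h => Option.some_ne_none _ h.symm
    · rw [embR_some]
      intro h
      have hrz : (r : ℂ) = z := Option.some_inj.mp h
      exact him (hrz ▸ Complex.ofReal_im r)
  have hord := hmem (some z)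
  rw [hpd, Nat.le_zero, Int.toNat_eq_zero, neg_nonpos] at hord
  have hle : ordAt F (some z) ≤ 0 := by
    by_cases hF0 : F = 0
    · subst hF0
      show ((0 : RatFunc ℂ).num.rootMultiplicity z : ℤ)
          - (0 : RatFunc ℂ).denom.rootMultiplicity z ≤ 0
      rw [RatFunc.num_zero, RatFunc.denom_zero, Polynomial.rootMultiplicity_zero,
        ← Polynomial.C_1, Polynomial.rootMultiplicity_C]
      norm_num
    by_cases hz : F.num.eval z = 0
    · -- the nontrivial case: a nonreal zero of the extremal function is impossible
      exfalso
      have hne : E.Nonempty := hEinf.nonempty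
      have hpos := lead_pos E hEc hne c hc F hF
      set d := polesDiv c none with hddef
      have hdnz : F.denom ≠ 0 := RatFunc.denom_ne_zero F
      -- denominator does not vanish on E
      have hdenE : ∀ r ∈ E, F.denom.eval (r : ℂ) ≠ 0 := by
        intro r hr h0
        have hnum : F.num.eval (r : ℂ) ≠ 0 := by
          intro h1
          obtain ⟨a, b, hab⟩ := F.isCoprime_num_denom
          have := congrArg (Polynomial.eval (r : ℂ)) hab
          simp [h0, h1] at this
        have h2 := hmem (some (r : ℂ))
        rw [Int.toNat_le] at h2
        have e : ordAt F (some (r : ℂ)) = (F.num.rootMultiplicity (r : ℂ) : ℤ)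
            - F.denom.rootMultiplicity (r : ℂ) := rfl
        rw [e, Polynomial.rootMultiplicity_eq_zero hnum] at h2
        have hrmpos : 0 < F.denom.rootMultiplicity (r : ℂ) :=
          (Polynomial.rootMultiplicity_pos hdnz).mpr h0
        have hpd1 : 0 < polesDiv c (some (r : ℂ)) := by omega
        obtain ⟨k, hk⟩ := Finset.card_pos.mp hpd1
        have hk2 := (Finset.mem_filter.mp hk).2
        rcases hck : c k with _ | s
        · rw [hck, embR_none] at hk2; exact Option.some_ne_none _ hk2.symm
        · rw [hck, embR_some] at hk2
          have hsr : s = r := by exact_mod_cast Option.some_inj.mp hk2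
          exact hc k (by rw [hck, hsr]; exact ⟨r, hr, rfl⟩)
      have hznum : F.num ≠ 0 := RatFunc.num_ne_zero hF0
      obtain ⟨P, hP⟩ : (X - C z) ∣ F.num := Polynomial.dvd_iff_isRoot.mpr hz
      have hPne : P ≠ 0 := by rintro rfl; rw [mul_zero] at hP; exact hznum hP
      have hdz : F.denom.eval z ≠ 0 := by
        intro h0
        obtain ⟨a, b, hab⟩ := F.isCoprime_num_denom
        have := congrArg (Polynomial.eval z) hab
        simp [h0, hz] at this
      have hdzrm : F.denom.rootMultiplicity z = 0 := Polynomial.rootMultiplicity_eq_zero hdz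
      have numdeg : F.num.natDegree = 1 + P.natDegree := by
        rw [hP, Polynomial.natDegree_mul (Polynomial.X_sub_C_ne_zero z) hPne,
          Polynomial.natDegree_X_sub_C]
      have numlc : F.num.leadingCoeff = P.leadingCoeff := by
        rw [hP, Polynomial.leadingCoeff_mul, (Polynomial.monic_X_sub_C z).leadingCoeff, one_mul]
      set x0 : ℂ := (z.re : ℂ) with hx0def
      have hz_ne : ∀ r : ℝ, (r : ℂ) - z ≠ 0 := by
        intro r h
        rw [sub_eq_zero] at h
        exact him (h ▸ Complex.ofReal_im r)
      set f : ℝ → ℝ := fun r => ‖(r : ℂ) - x0‖ / ‖(r : ℂ) - z‖ with hfdef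
      have hflt : ∀ r : ℝ, f r < 1 := by
        intro r
        rw [hfdef]
        rw [div_lt_one (norm_pos_iff.mpr (hz_ne r))]
        have h1 : ‖(r : ℂ) - x0‖ ^ 2 < ‖(r : ℂ) - z‖ ^ 2 := by
          rw [Complex.sq_norm, Complex.sq_norm, Complex.normSq_apply, Complex.normSq_apply]
          simp only [Complex.sub_re, Complex.sub_im, Complex.ofReal_re, Complex.ofReal_im,
            hx0def]
          have := mul_self_pos.mpr him
          nlinarith
        exact lt_of_pow_lt_pow_left₀ 2 (norm_nonneg _) h1
      have hfc : Continuous f := by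
        rw [hfdef]
        apply Continuous.div
        · exact continuous_norm.comp (Complex.continuous_ofReal.sub continuous_const)
        · exact continuous_norm.comp (Complex.continuous_ofReal.sub continuous_const)
        · intro r; exact norm_ne_zero_iff.mpr (hz_ne r)
      obtain ⟨r0, hr0, hmax⟩ := hEc.exists_isMaxOn hne hfc.continuousOn
      set κ : ℝ := f r0 with hκdef
      have hκ1 : κ < 1 := hflt r0
      have hκ0 : 0 ≤ κ := div_nonneg (norm_nonneg _) (norm_nonneg _)
      set κ' : ℝ := max κ 2⁻¹ with hκ'def
      have hκ'pos : (0:ℝ) < κ' := lt_of_lt_of_le (by norm_num) (le_max_right _ _)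
      have hκ'1 : κ' < 1 := max_lt hκ1 (by norm_num)
      set t : ℝ := κ'⁻¹ with htdef
      have htpos : 0 < t := inv_pos.mpr hκ'pos
      have ht1 : 1 < t := by
        rw [htdef]
        exact (one_lt_inv₀ hκ'pos).mpr hκ'1
      have htκ' : t * κ' = 1 := inv_mul_cancel₀ hκ'pos.ne'
      have htC : ((t : ℝ) : ℂ) ≠ 0 := by exact_mod_cast htpos.ne'
      set pG : ℂ[X] := C (t : ℂ) * ((X - C x0) * P) with hpGdef
      have hpGne : pG ≠ 0 :=
        mul_ne_zero (by simpa using htC) (mul_ne_zero (Polynomial.X_sub_C_ne_zero x0) hPne)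
      set G : RatFunc ℂ := aM pG / aM F.denom with hGdef
      have degG : pG.natDegree = F.num.natDegree := by
        rw [hpGdef, Polynomial.natDegree_C_mul htC,
          Polynomial.natDegree_mul (Polynomial.X_sub_C_ne_zero x0) hPne,
          Polynomial.natDegree_X_sub_C, numdeg]
      have lcG : pG.leadingCoeff = (t : ℂ) * P.leadingCoeff := by
        rw [hpGdef, Polynomial.leadingCoeff_mul, Polynomial.leadingCoeff_C,
          Polynomial.leadingCoeff_mul, (Polynomial.monic_X_sub_C x0).leadingCoeff, one_mul]
      have rmG : ∀ w, pG.rootMultiplicity w = (if w = x0 then 1 else 0) + P.rootMultiplicity w := by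
        intro w
        rw [hpGdef, Polynomial.rootMultiplicity_mul
            (mul_ne_zero (by simpa using htC)
              (mul_ne_zero (Polynomial.X_sub_C_ne_zero x0) hPne)),
          Polynomial.rootMultiplicity_C, zero_add,
          Polynomial.rootMultiplicity_mul (mul_ne_zero (Polynomial.X_sub_C_ne_zero x0) hPne),
          Polynomial.rootMultiplicity_X_sub_C]
      have rmF : ∀ w, F.num.rootMultiplicity w
          = (if w = z then 1 else 0) + P.rootMultiplicity w := by
        intro w
        rw [hP, Polynomial.rootMultiplicity_mul (mul_ne_zero (Polynomial.X_sub_C_ne_zero z) hPne),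
          Polynomial.rootMultiplicity_X_sub_C]
      have hmemG : MemL c G := by
        intro x
        cases x with
        | none =>
          rw [hGdef, ord_inf _ _ hpGne hdnz, degG, Int.toNat_le]
          have h := hmem none
          rw [Int.toNat_le] at h
          have e : ordAt F none = (F.denom.natDegree : ℤ) - F.num.natDegree := rfl
          rw [e] at h
          omega
        | some w =>
          rw [hGdef, ord_fin _ _ hpGne hdnz w, Int.toNat_le, rmG w]
          have h := hmem (some w)
          rw [Int.toNat_le] at h
          have e : ordAt F (some w) = (F.num.rootMultiplicity w : ℤ)
              - F.denom.rootMultiplicity w := rfl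
          rw [e, rmF w] at h
          by_cases hw : w = z
          · subst hw
            rw [hpd, hdzrm]
            split_ifs <;> push_cast <;> omega
          · rw [if_neg hw] at h
            split_ifs at h ⊢ <;> push_cast at h ⊢ <;> omega
      have hubG : UnitBdd ((fun r : ℝ => (some r : RLine)) '' E) G := by
        rintro x ⟨r, hr, rfl⟩
        have hdr := hdenE r hr
        have heG : evalPt G (some r) = pG.eval (r : ℂ) / F.denom.eval (r : ℂ) := by
          show (evalSph G (some (r : ℂ))).getD 0 = _
          rw [hGdef, evalSph_fin _ _ _ hdr, Option.getD_some]
        have heF : evalPt F (some r) = F.num.eval (r : ℂ) / F.denom.eval (r : ℂ) := by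
          show (evalSph F (some (r : ℂ))).getD 0 = _
          conv_lhs => rw [← RatFunc.num_div_denom F]
          rw [evalSph_fin _ _ _ hdr, Option.getD_some]
        have hFb := hF.2.1 (some r) ⟨r, hr, rfl⟩
        rw [heF] at hFb
        rw [heG]
        have hnum_eval : F.num.eval (r : ℂ) = ((r : ℂ) - z) * P.eval (r : ℂ) := by
          rw [hP]; simp [Polynomial.eval_mul]
        have hpG_eval : pG.eval (r : ℂ) = (t : ℂ) * (((r : ℂ) - x0) * P.eval (r : ℂ)) := by
          rw [hpGdef]; simp [Polynomial.eval_mul]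
        set A : ℝ := ‖(r : ℂ) - x0‖ with hA
        set B : ℝ := ‖(r : ℂ) - z‖ with hB
        set Pv : ℝ := ‖P.eval (r : ℂ)‖ with hPv
        set Dv : ℝ := ‖F.denom.eval (r : ℂ)‖ with hDv
        have hBpos : 0 < B := norm_pos_iff.mpr (hz_ne r)
        have hDvpos : 0 < Dv := norm_pos_iff.mpr hdr
        have e1 : ‖pG.eval (r : ℂ) / F.denom.eval (r : ℂ)‖ = t * A * Pv / Dv := by
          rw [norm_div, hpG_eval]
          rw [norm_mul, norm_mul, Complex.norm_real, Real.norm_eq_abs, abs_of_pos htpos, ← mul_assoc]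
        have e2 : ‖F.num.eval (r : ℂ) / F.denom.eval (r : ℂ)‖ = B * Pv / Dv := by
          rw [norm_div, hnum_eval, norm_mul]
        rw [e1]
        rw [e2] at hFb
        have hfr : f r ≤ κ := hmax hr
        have hfr' : A / B ≤ κ' := le_trans (le_trans hfr (le_max_left _ _)) (le_refl _)
        have hA0 : 0 ≤ A := norm_nonneg _
        have hPv0 : 0 ≤ Pv := norm_nonneg _
        -- t * A * Pv / Dv = t * (A/B) * (B * Pv / Dv) ≤ t * κ' * 1 = 1
        have hAB : A ≤ κ' * B := by
          rw [div_le_iff₀ hBpos] at hfr'; linarith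
        have hFb' : B * Pv / Dv ≤ 1 := hFb
        have hnum_le : t * A * Pv ≤ t * κ' * (B * Pv) := by nlinarith [mul_nonneg (mul_nonneg htpos.le hPv0) (sub_nonneg.mpr hAB)]
        calc t * A * Pv / Dv ≤ t * κ' * (B * Pv) / Dv := (div_le_div_iff_of_pos_right hDvpos).mpr hnum_le
          _ = t * κ' * (B * Pv / Dv) := by ring
          _ ≤ t * κ' * 1 := by
              apply mul_le_mul_of_nonneg_left hFb'
              positivity
          _ = 1 := by rw [mul_one, htκ']
      -- leading values
      have hXd : (RatFunc.X : RatFunc ℂ) ^ d = aM (X ^ d) := by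
        rw [map_pow, RatFunc.algebraMap_X]
      have hqd_ne : F.denom * X ^ d ≠ 0 := mul_ne_zero hdnz (pow_ne_zero _ Polynomial.X_ne_zero)
      have hqd_deg : (F.denom * X ^ d).natDegree = F.denom.natDegree + d := by
        rw [Polynomial.natDegree_mul hdnz (pow_ne_zero _ Polynomial.X_ne_zero),
          Polynomial.natDegree_X_pow]
      have hqd_lc : (F.denom * X ^ d).leadingCoeff = F.denom.leadingCoeff := by
        rw [Polynomial.leadingCoeff_mul, Polynomial.leadingCoeff_X_pow, mul_one]
      have hdegle : (F.num.natDegree : ℤ) ≤ F.denom.natDegree + d := by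
        have h := hmem none
        rw [Int.toNat_le] at h
        have e : ordAt F none = (F.denom.natDegree : ℤ) - F.num.natDegree := rfl
        rw [e] at h
        rw [hddef]
        omega
      have hsplitF : F / RatFunc.X ^ d = aM F.num / aM (F.denom * X ^ d) := by
        conv_lhs => rw [← RatFunc.num_div_denom F]
        rw [hXd, div_div, ← map_mul]
      have hsplitG : G / RatFunc.X ^ d = aM pG / aM (F.denom * X ^ d) := by
        rw [hGdef, hXd, div_div, ← map_mul]
      have hLF : leadVal F none d = if F.num.natDegree = F.denom.natDegree + d
          then F.num.leadingCoeff / F.denom.leadingCoeff else 0 := by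
        show (evalSph (F / RatFunc.X ^ d) none).getD 0 = _
        rw [hsplitF, evalSph_inf _ _ hznum hqd_ne, hqd_deg,
          if_neg (by omega), Option.getD_some, hqd_lc]
      have hLG : leadVal G none d = (t : ℂ) * leadVal F none d := by
        show (evalSph (G / RatFunc.X ^ d) none).getD 0 = _
        rw [hsplitG, evalSph_inf _ _ hpGne hqd_ne, hqd_deg, degG,
          if_neg (by omega), Option.getD_some, hqd_lc, hLF]
        split_ifs with hcond
        · rw [lcG, numlc, mul_div_assoc]
        · rw [mul_zero]
      have hext := hF.2.2 G hmemG hubG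
      have hre : (leadVal G none (polesDiv c (embR none))).re
          = t * (leadVal F none d).re := by
        show (leadVal G none (polesDiv c none)).re = _
        rw [← hddef, hLG]
        simp [Complex.mul_re]
      rw [hre] at hext
      have hext' : t * (leadVal F none d).re ≤ (leadVal F none d).re := hext
      nlinarith
    · show (F.num.rootMultiplicity z : ℤ) - F.denom.rootMultiplicity z ≤ 0
      rw [Polynomial.rootMultiplicity_eq_zero hz]
      omega
  unfold Dn0
  rw [hpd]
  push_cast
  omega

end
end

section
/- If the extremal function F_n for the rational Chebyshev/residual problem is nonconstant, then its degree as a rational map satisfies deg F_n ≥ ⌈(n+1)/2⌉. -/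
noncomputable section
open Polynomial Filter Set MeasureTheory
open scoped Classical


/-- compatibility: the complex absolute value as an `AbsoluteValue` -/
def Complex.abs : AbsoluteValue ℂ ℝ where
  toFun z := ‖z‖
  map_mul' := norm_mul
  nonneg' := norm_nonneg
  eq_zero' _ := norm_eq_zero
  add_le' := norm_add_le

lemma Complex.abs_apply (z : ℂ) : Complex.abs z = ‖z‖ := rfl

lemma Complex.norm_eq_abs (z : ℂ) : ‖z‖ = Complex.abs z := rfl

lemma Complex.abs_ofReal (r : ℝ) : Complex.abs (r : ℂ) = |r| := by
  rw [Complex.abs_apply, Complex.norm_real, Real.norm_eq_abs]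

lemma Complex.abs_conj (z : ℂ) : Complex.abs (starRingEnd ℂ z) = Complex.abs z :=
  Complex.norm_conj z

lemma Complex.continuous_abs : Continuous Complex.abs := continuous_norm

lemma Complex.sq_abs (z : ℂ) : Complex.abs z ^ 2 = Complex.normSq z := Complex.sq_norm z

lemma Complex.normSq_eq_abs (z : ℂ) : Complex.normSq z = Complex.abs z ^ 2 :=
  Complex.normSq_eq_norm_sq z

lemma Complex.re_le_abs (z : ℂ) : z.re ≤ Complex.abs z := Complex.re_le_norm z

namespace ExtremalProof

open Complex

abbrev PC := Polynomial ℂ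

def RF (a b : PC) : RatFunc ℂ := algebraMap PC (RatFunc ℂ) a / algebraMap PC (RatFunc ℂ) b

lemma RF_num_denom (F : RatFunc ℂ) : RF F.num F.denom = F := RatFunc.num_div_denom F

lemma RF_cross {a b : PC} (hb : b ≠ 0) : (RF a b).num * b = a * (RF a b).denom := by
  have h1 : algebraMap PC (RatFunc ℂ) (RF a b).num / algebraMap PC (RatFunc ℂ) (RF a b).denom
      = algebraMap PC (RatFunc ℂ) a / algebraMap PC (RatFunc ℂ) b := RatFunc.num_div_denom _
  rw [div_eq_div_iff (RatFunc.algebraMap_ne_zero (RatFunc.denom_ne_zero _))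
    (RatFunc.algebraMap_ne_zero hb), ← map_mul, ← map_mul] at h1
  exact RatFunc.algebraMap_injective ℂ h1

lemma RF_denom_dvd {b : PC} (a : PC) (hb : b ≠ 0) : (RF a b).denom ∣ b :=
  (RatFunc.denom_dvd hb).2 ⟨a, rfl⟩

lemma RF_eval_denom_ne {a b : PC} {z : ℂ} (hb : b ≠ 0) (hz : b.eval z ≠ 0) :
    (RF a b).denom.eval z ≠ 0 := by
  obtain ⟨t, ht⟩ := RF_denom_dvd a hb
  intro h0
  rw [ht, Polynomial.eval_mul, h0, zero_mul] at hz
  exact hz rfl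

lemma RF_eval_eq {a b : PC} {z : ℂ} (hb : b ≠ 0) (hz : b.eval z ≠ 0) :
    (RF a b).num.eval z / (RF a b).denom.eval z = a.eval z / b.eval z := by
  rw [div_eq_div_iff (RF_eval_denom_ne hb hz) hz]
  have h := congrArg (Polynomial.eval z) (RF_cross (a := a) hb)
  simpa using h

lemma evalSph_RF_some {a b : PC} {z : ℂ} (hb : b ≠ 0) (hz : b.eval z ≠ 0) :
    evalSph (RF a b) (Option.some z) = Option.some (a.eval z / b.eval z) := by
  show (if (RF a b).denom.eval z = 0 then none else some ((RF a b).num.eval z / (RF a b).denom.eval z))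
      = Option.some (a.eval z / b.eval z)
  rw [if_neg (RF_eval_denom_ne hb hz), RF_eval_eq hb hz]

lemma num_nonzero {a b : PC} (ha : a ≠ 0) (hb : b ≠ 0) : (RF a b).num ≠ 0 := by
  intro h0
  have : RF a b = 0 := by
    rw [← RF_num_denom (RF a b), h0]
    simp [RF]
  rw [RF] at this
  rw [_root_.div_eq_zero_iff] at this
  rcases this with h | h
  · exact ha (by simpa using (map_eq_zero_iff _ (RatFunc.algebraMap_injective ℂ)).1 h)
  · exact hb (by simpa using (map_eq_zero_iff _ (RatFunc.algebraMap_injective ℂ)).1 h)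

lemma evalSph_RF_none {a b : PC} (hb : b ≠ 0) (hab : a.natDegree ≤ b.natDegree) :
    evalSph (RF a b) none = Option.some (a.coeff b.natDegree / b.leadingCoeff) := by
  by_cases ha : a = 0
  · subst ha
    have h0 : RF 0 b = 0 := by simp [RF]
    rw [h0]
    show (if (0:RatFunc ℂ).denom.natDegree < (0:RatFunc ℂ).num.natDegree then none
      else some (if (0:RatFunc ℂ).num.natDegree = (0:RatFunc ℂ).denom.natDegree then
        (0:RatFunc ℂ).num.leadingCoeff / (0:RatFunc ℂ).denom.leadingCoeff else 0)) = _
    simp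
  · have hnum : (RF a b).num ≠ 0 := num_nonzero ha hb
    have hden : (RF a b).denom ≠ 0 := RatFunc.denom_ne_zero _
    have hdeg : (RF a b).num.natDegree + b.natDegree = a.natDegree + (RF a b).denom.natDegree := by
      have h := congrArg Polynomial.natDegree (RF_cross (a := a) hb)
      rwa [Polynomial.natDegree_mul hnum hb, Polynomial.natDegree_mul ha hden] at h
    have hlc : (RF a b).num.leadingCoeff * b.leadingCoeff
        = a.leadingCoeff * (RF a b).denom.leadingCoeff := by
      have h := congrArg Polynomial.leadingCoeff (RF_cross (a := a) hb)
      rwa [Polynomial.leadingCoeff_mul, Polynomial.leadingCoeff_mul] at h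
    show (if (RF a b).denom.natDegree < (RF a b).num.natDegree then none
      else some (if (RF a b).num.natDegree = (RF a b).denom.natDegree then
        (RF a b).num.leadingCoeff / (RF a b).denom.leadingCoeff else 0)) = _
    rcases lt_or_eq_of_le hab with hlt | heq
    · have h1 : (RF a b).num.natDegree < (RF a b).denom.natDegree := by omega
      rw [if_neg (by omega), if_neg (by omega)]
      rw [Polynomial.coeff_eq_zero_of_natDegree_lt hlt, zero_div]
    · have h1 : (RF a b).num.natDegree = (RF a b).denom.natDegree := by omega
      rw [if_neg (by omega), if_pos h1]
      congr 1
      rw [div_eq_div_iff (Polynomial.leadingCoeff_ne_zero.2 hden)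
        (Polynomial.leadingCoeff_ne_zero.2 hb), hlc, ← heq, Polynomial.coeff_natDegree]

lemma RF_mul_poly (a b s : PC) : RF a b * algebraMap PC (RatFunc ℂ) s = RF (a * s) b := by
  rw [RF, RF, map_mul, div_mul_eq_mul_div]

lemma RF_div_poly (a b s : PC) : RF a b / algebraMap PC (RatFunc ℂ) s = RF a (b * s) := by
  rw [RF, RF, map_mul, div_div]

lemma RF_cancel {a b : PC} (t : PC) (ht : t ≠ 0) : RF (a * t) (b * t) = RF a b := by
  rw [RF, RF, map_mul, map_mul, mul_div_mul_right _ _ (RatFunc.algebraMap_ne_zero ht)]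

end ExtremalProof
namespace ExtremalProof

section Qp
variable {n : ℕ} (c : Fin n → RLine)

/-- linear factor attached to a prescribed pole -/
def lin (o : RLine) : PC :=
  Option.casesOn o 1 (fun r => Polynomial.X - Polynomial.C (r : ℂ))

lemma lin_monic (o : RLine) : (lin o).Monic := by
  cases o with
  | none => exact Polynomial.monic_one
  | some r => exact Polynomial.monic_X_sub_C _

/-- the denominator polynomial with prescribed (finite) poles -/
def qp : PC := ∏ k : Fin n, lin (c k)

lemma qp_monic : (qp c).Monic :=
  Polynomial.monic_prod_of_monic _ _ fun k _ => lin_monic (c k)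

lemma qp_ne : qp c ≠ 0 := (qp_monic c).ne_zero

lemma embR_eq_none {o : RLine} : embR o = none ↔ o = none := by
  cases o with
  | none => exact ⟨fun _ => rfl, fun _ => rfl⟩
  | some r => simp [embR]

lemma embR_some (r : ℝ) : embR (Option.some r) = Option.some (r : ℂ) := rfl

lemma qp_natDegree : (qp c).natDegree + polesDiv c none = n := by
  have h1 : (qp c).natDegree = ∑ k : Fin n, (lin (c k)).natDegree := by
    rw [qp, Polynomial.natDegree_prod]
    intro k _
    exact (lin_monic (c k)).ne_zero
  have h2 : ∀ k : Fin n, (lin (c k)).natDegree = if embR (c k) = none then 0 else 1 := by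
    intro k
    cases hk : c k with
    | none => simp [lin, embR]; exact (if_pos rfl).symm
    | some r => simp [lin, embR, Polynomial.natDegree_X_sub_C]
  rw [h1]
  have h3 : ∑ k : Fin n, (lin (c k)).natDegree
      = (Finset.univ.filter (fun k : Fin n => ¬ (embR (c k) = none))).card := by
    rw [Finset.card_filter]
    rw [Finset.sum_congr rfl (fun k _ => h2 k)]
    apply Finset.sum_congr rfl
    intro k _
    by_cases h : embR (c k) = none <;> simp [h]
  rw [h3]
  unfold polesDiv
  have h4 := Finset.card_filter_add_card_filter_not
    (s := (Finset.univ : Finset (Fin n))) (p := fun k : Fin n => embR (c k) = none)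
  simp only [Finset.card_univ, Fintype.card_fin] at h4
  omega

lemma rm_prod {ι : Type} (s : Finset ι) (f : ι → PC) (hf : ∀ k ∈ s, f k ≠ 0) (z : ℂ) :
    (∏ k ∈ s, f k).rootMultiplicity z = ∑ k ∈ s, (f k).rootMultiplicity z := by
  classical
  induction s using Finset.cons_induction with
  | empty =>
    simp only [Finset.prod_empty, Finset.sum_empty]
    exact Polynomial.rootMultiplicity_eq_zero (by simp [Polynomial.IsRoot])
  | cons a s ha ih =>
    rw [Finset.prod_cons, Finset.sum_cons,
      Polynomial.rootMultiplicity_mul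
        (mul_ne_zero (hf a (Finset.mem_cons_self a s))
          (Finset.prod_ne_zero_iff.2 fun i hi => hf i (Finset.mem_cons_of_mem hi))),
      ih fun i hi => hf i (Finset.mem_cons_of_mem hi)]

lemma rm_lin (o : RLine) (z : ℂ) :
    (lin o).rootMultiplicity z = if embR o = Option.some z then 1 else 0 := by
  classical
  cases o with
  | none =>
    have h : (lin (none : RLine)) = 1 := rfl
    rw [h, Polynomial.rootMultiplicity_eq_zero (by simp [Polynomial.IsRoot])]
    exact (if_neg (by intro h'; cases h')).symm
  | some r =>
    have h : lin (Option.some r : RLine) = Polynomial.X - Polynomial.C (r : ℂ) := rfl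
    rw [h, Polynomial.rootMultiplicity_X_sub_C, embR_some]
    by_cases hz : z = (r : ℂ)
    · rw [if_pos hz, if_pos (by rw [hz])]
    · rw [if_neg hz]
      exact (if_neg (fun h' => hz (Option.some_injective ℂ h').symm)).symm

lemma rm_qp (z : ℂ) : (qp c).rootMultiplicity z = polesDiv c (Option.some z) := by
  classical
  rw [qp, rm_prod _ _ (fun k _ => (lin_monic (c k)).ne_zero)]
  unfold polesDiv
  rw [Finset.card_filter]
  apply Finset.sum_congr rfl
  intro k _
  rw [rm_lin]

end Qp
end ExtremalProof
namespace ExtremalProof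

lemma conj_eval (P : PC) (z : ℂ) :
    starRingEnd ℂ (P.eval z) = (P.map (starRingEnd ℂ)).eval (starRingEnd ℂ z) := by
  rw [Polynomial.eval_map]
  have h := Polynomial.hom_eval₂ P (RingHom.id ℂ) (starRingEnd ℂ : ℂ →+* ℂ) z
  simpa using h

/-- a polynomial has real coefficients -/
def rpoly (P : PC) : Prop := P.map (starRingEnd ℂ) = P

lemma rpoly_eval_real {P : PC} (hP : rpoly P) (r : ℝ) :
    starRingEnd ℂ (P.eval (r : ℂ)) = P.eval (r : ℂ) := by
  rw [conj_eval, hP, Complex.conj_ofReal]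

section Qp2
variable {n : ℕ} (c : Fin n → RLine)

lemma rpoly_lin (o : RLine) : rpoly (lin o) := by
  unfold rpoly
  cases o with
  | none =>
    have h : lin (none : RLine) = 1 := rfl
    rw [h]; simp
  | some r =>
    have h : lin (Option.some r : RLine) = Polynomial.X - Polynomial.C (r:ℂ) := rfl
    rw [h]; simp [Polynomial.map_sub, Complex.conj_ofReal]

lemma rpoly_qp : rpoly (qp c) := by
  rw [rpoly, qp, Polynomial.map_prod]
  exact Finset.prod_congr rfl fun k _ => rpoly_lin (c k)

lemma root_qp_real {z : ℂ} (hz : (qp c).eval z = 0) : starRingEnd ℂ z = z := by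
  rw [qp, Polynomial.eval_prod] at hz
  obtain ⟨k, _, hk⟩ := Finset.prod_eq_zero_iff.1 hz
  cases hc : c k with
  | none => rw [hc] at hk; simp [lin] at hk
  | some r =>
    rw [hc] at hk
    have : z - (r : ℂ) = 0 := by simpa [lin] using hk
    have hzr : z = (r : ℂ) := by linear_combination this
    rw [hzr, Complex.conj_ofReal]

lemma rpoly_of_monic_dvd_qp {u : PC} (hu : u.Monic) (hdvd : u ∣ qp c) : rpoly u := by
  have hprod := (IsAlgClosed.splits u).eq_prod_roots_of_monic hu
  rw [rpoly]
  conv_lhs => rw [hprod]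
  rw [Polynomial.map_multiset_prod, Multiset.map_map]
  rw [show ((fun p : PC => p.map (starRingEnd ℂ)) ∘ fun a => Polynomial.X - Polynomial.C a)
      = fun a : ℂ => Polynomial.X - Polynomial.C (starRingEnd ℂ a) by
    funext a; simp [Polynomial.map_sub]]
  have hroots : ∀ z ∈ u.roots, Polynomial.X - Polynomial.C (starRingEnd ℂ z)
      = Polynomial.X - Polynomial.C z := by
    intro z hz
    obtain ⟨t, ht⟩ := hdvd
    have hz0 : u.eval z = 0 := Polynomial.isRoot_of_mem_roots hz
    have : (qp c).eval z = 0 := by rw [ht, Polynomial.eval_mul, hz0, zero_mul]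
    rw [root_qp_real c this]
  rw [Multiset.map_congr rfl hroots, ← hprod]

lemma rm_le_of_dvd {u v : PC} (h : u ∣ v) (hv : v ≠ 0) (z : ℂ) :
    u.rootMultiplicity z ≤ v.rootMultiplicity z :=
  (Polynomial.le_rootMultiplicity_iff hv).2 ((Polynomial.pow_rootMultiplicity_dvd u z).trans h)

lemma memL_RF (h : PC) (hdeg : h.natDegree ≤ n) : MemL c (RF h (qp c)) := by
  classical
  intro x
  by_cases h0 : h = 0
  · subst h0
    have hz : RF 0 (qp c) = 0 := by simp [RF]
    rw [hz]
    cases x with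
    | none =>
      show (-(((0:RatFunc ℂ).denom.natDegree : ℤ) - (0:RatFunc ℂ).num.natDegree)).toNat ≤ _
      simp [RatFunc.num_zero, RatFunc.denom_zero]
    | some z =>
      show (-(((0:RatFunc ℂ).num.rootMultiplicity z : ℤ)
          - (0:RatFunc ℂ).denom.rootMultiplicity z)).toNat ≤ _
      simp [RatFunc.num_zero, RatFunc.denom_zero, Polynomial.rootMultiplicity_zero]
      rw [Polynomial.rootMultiplicity_eq_zero (by simp [Polynomial.IsRoot])]
      simp
  · have hcross := RF_cross (a := h) (qp_ne c)
    have hdvd := RF_denom_dvd h (qp_ne c)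
    cases x with
    | none =>
      have hnum : (RF h (qp c)).num ≠ 0 := num_nonzero h0 (qp_ne c)
      have hdg : (RF h (qp c)).num.natDegree + (qp c).natDegree
          = h.natDegree + (RF h (qp c)).denom.natDegree := by
        have hh := congrArg Polynomial.natDegree hcross
        rwa [Polynomial.natDegree_mul hnum (qp_ne c),
          Polynomial.natDegree_mul h0 (RatFunc.denom_ne_zero _)] at hh
      have hq := qp_natDegree c
      show (-(((RF h (qp c)).denom.natDegree : ℤ) - (RF h (qp c)).num.natDegree)).toNat
          ≤ polesDiv c none
      rw [Int.toNat_le]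
      push_cast
      omega
    | some z =>
      have h1 : (RF h (qp c)).denom.rootMultiplicity z ≤ (qp c).rootMultiplicity z :=
        rm_le_of_dvd hdvd (qp_ne c) z
      rw [rm_qp c z] at h1
      show (-(((RF h (qp c)).num.rootMultiplicity z : ℤ)
          - (RF h (qp c)).denom.rootMultiplicity z)).toNat ≤ polesDiv c (Option.some z)
      rw [Int.toNat_le]
      push_cast
      omega

lemma denom_dvd_qp {F : RatFunc ℂ} (hF : MemL c F) : F.denom ∣ qp c := by
  classical
  have hcount : F.denom.roots ≤ (qp c).roots := by
    rw [Multiset.le_iff_count]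
    intro z
    rw [Polynomial.count_roots, Polynomial.count_roots]
    rcases Nat.eq_zero_or_pos (F.denom.rootMultiplicity z) with h0 | hpos
    · rw [h0]; exact Nat.zero_le _
    · have hroot : F.denom.eval z = 0 :=
        (Polynomial.rootMultiplicity_pos (RatFunc.denom_ne_zero F)).1 hpos
      have hnum0 : F.num.eval z ≠ 0 := by
        obtain ⟨u, v, huv⟩ := F.isCoprime_num_denom
        intro hn
        have := congrArg (Polynomial.eval z) huv
        simp [hn, hroot] at this
      have hrmnum : F.num.rootMultiplicity z = 0 :=
        Polynomial.rootMultiplicity_eq_zero hnum0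
      have hx := hF (Option.some z)
      rw [← rm_qp c z] at hx
      have hx2 : (-((F.num.rootMultiplicity z : ℤ) - F.denom.rootMultiplicity z)).toNat
          ≤ (qp c).rootMultiplicity z := hx
      rw [Int.toNat_le] at hx2
      push_cast at hx2
      omega
  calc F.denom = (F.denom.roots.map fun a => Polynomial.X - Polynomial.C a).prod :=
        (IsAlgClosed.splits _).eq_prod_roots_of_monic (RatFunc.monic_denom F)
    _ ∣ ((qp c).roots.map fun a => Polynomial.X - Polynomial.C a).prod :=
        Multiset.prod_dvd_prod_of_le (Multiset.map_le_map hcount)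
    _ ∣ qp c := Polynomial.prod_multiset_X_sub_C_dvd _

lemma rep_of_memL {F : RatFunc ℂ} (hF : MemL c F) :
    ∃ β : PC, β ≠ 0 ∧ qp c = F.denom * β ∧ F = RF (F.num * β) (qp c)
      ∧ (F.num * β).natDegree ≤ n := by
  obtain ⟨β, hβ⟩ := denom_dvd_qp c hF
  have hβ0 : β ≠ 0 := fun h => qp_ne c (by rw [hβ, h, mul_zero])
  refine ⟨β, hβ0, hβ, ?_, ?_⟩
  · rw [hβ]
    exact ((RF_cancel β hβ0).trans (RF_num_denom F)).symm
  · by_cases hp : F.num = 0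
    · simp [hp, Polynomial.natDegree_zero]
    · have hdeg1 : (F.num * β).natDegree = F.num.natDegree + β.natDegree :=
        Polynomial.natDegree_mul hp hβ0
      have hdeg2 : (qp c).natDegree = F.denom.natDegree + β.natDegree := by
        rw [hβ, Polynomial.natDegree_mul (RatFunc.denom_ne_zero _) hβ0]
      have hq := qp_natDegree c
      have hx := hF none
      have hx2 : (-((F.denom.natDegree : ℤ) - F.num.natDegree)).toNat ≤ polesDiv c none := hx
      rw [Int.toNat_le] at hx2
      push_cast at hx2
      omega

end Qp2
end ExtremalProof
namespace ExtremalProof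

lemma abs_eval_le (A : PC) (m : ℕ) (hm : A.natDegree ≤ m) :
    ∃ S : ℝ, 0 ≤ S ∧ ∀ x : ℝ, 1 ≤ |x| → Complex.abs (A.eval (x:ℂ)) ≤ S * |x| ^ m := by
  refine ⟨∑ i ∈ Finset.range (A.natDegree + 1), Complex.abs (A.coeff i), by positivity, ?_⟩
  intro x hx
  rw [Polynomial.eval_eq_sum_range]
  refine le_trans (Complex.abs.sum_le _ _) ?_
  rw [Finset.sum_mul]
  apply Finset.sum_le_sum
  intro i hi
  rw [Finset.mem_range] at hi
  have hi' : i ≤ m := by omega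
  rw [map_mul, map_pow, Complex.abs_ofReal]
  have h1 : |x| ^ i ≤ |x| ^ m := pow_le_pow_right₀ hx hi'
  exact mul_le_mul_of_nonneg_left h1 (AbsoluteValue.nonneg _ _)

lemma abs_eval_lower (B : PC) (hB : B ≠ 0) :
    ∃ R C : ℝ, 1 ≤ R ∧ 0 < C ∧ ∀ x : ℝ, R ≤ |x| →
      C * |x| ^ B.natDegree ≤ Complex.abs (B.eval (x:ℂ)) := by
  have hlc : 0 < Complex.abs B.leadingCoeff := by
    simp [Polynomial.leadingCoeff_ne_zero.2 hB]
  rcases Nat.eq_zero_or_pos B.natDegree with h0 | hpos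
  · refine ⟨1, Complex.abs B.leadingCoeff, le_refl _, hlc, ?_⟩
    intro x _
    have heval : B.eval (x:ℂ) = B.coeff 0 := by
      conv_lhs => rw [Polynomial.eq_C_of_natDegree_eq_zero h0]
      simp
    have hlc0 : B.leadingCoeff = B.coeff 0 := by rw [Polynomial.leadingCoeff, h0]
    rw [heval, h0, pow_zero, mul_one, hlc0]
  · obtain ⟨S, hS0, hS⟩ := abs_eval_le B.eraseLead (B.natDegree - 1)
      (le_trans (Polynomial.eraseLead_natDegree_le B) (by omega))
    set L := Complex.abs B.leadingCoeff with hL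
    refine ⟨max 1 ((2 * S + 2) / L), L / 2, le_max_left _ _, by positivity, ?_⟩
    intro x hx
    have hx1 : 1 ≤ |x| := le_trans (le_max_left _ _) hx
    have hx2 : (2 * S + 2) / L ≤ |x| := le_trans (le_max_right _ _) hx
    have heval : B.leadingCoeff * (x:ℂ) ^ B.natDegree
        = B.eval (x:ℂ) - B.eraseLead.eval (x:ℂ) := by
      have h3 := congrArg (Polynomial.eval (x:ℂ)) (Polynomial.eraseLead_add_C_mul_X_pow B)
      simp only [Polynomial.eval_add, Polynomial.eval_mul, Polynomial.eval_C,
        Polynomial.eval_pow, Polynomial.eval_X] at h3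
      linear_combination h3
    have htri : L * |x| ^ B.natDegree
        ≤ Complex.abs (B.eval (x:ℂ)) + Complex.abs (B.eraseLead.eval (x:ℂ)) := by
      have h1 : Complex.abs (B.leadingCoeff * (x:ℂ) ^ B.natDegree)
          ≤ Complex.abs (B.eval (x:ℂ)) + Complex.abs (B.eraseLead.eval (x:ℂ)) := by
        rw [heval, ← Complex.norm_eq_abs, ← Complex.norm_eq_abs, ← Complex.norm_eq_abs]
        exact norm_sub_le _ _
      rwa [map_mul, map_pow, Complex.abs_ofReal] at h1
    have herase : Complex.abs (B.eraseLead.eval (x:ℂ)) ≤ S * |x| ^ (B.natDegree - 1) :=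
      hS x hx1
    have hLx : 2 * S + 2 ≤ |x| * L := (div_le_iff₀ hlc).1 hx2
    have hSx : S ≤ L / 2 * |x| := by
      have h2 : L / 2 * |x| = |x| * L / 2 := by ring
      rw [h2]
      linarith
    have hxm : |x| ^ B.natDegree = |x| * |x| ^ (B.natDegree - 1) := by
      rw [← pow_succ']
      congr 1
      omega
    have hS2 : S * |x| ^ (B.natDegree - 1) ≤ L / 2 * |x| ^ B.natDegree := by
      rw [hxm, ← mul_assoc]
      exact mul_le_mul_of_nonneg_right hSx (by positivity)
    linarith
end ExtremalProof
namespace ExtremalProof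

lemma closed_Er {E : Set RLine} (hEcl : IsClosed E) :
    IsClosed {r : ℝ | (Option.some r : RLine) ∈ E} :=
  hEcl.preimage OnePoint.continuous_coe

lemma bdd_on_E {E : Set RLine} (hEcl : IsClosed E) (A B : PC) (hB : B ≠ 0)
    (hBne : ∀ r : ℝ, (Option.some r : RLine) ∈ E → B.eval (r:ℂ) ≠ 0)
    (hdeg : (none : RLine) ∈ E → A.natDegree ≤ B.natDegree) :
    ∃ C : ℝ, 0 ≤ C ∧ ∀ r : ℝ, (Option.some r : RLine) ∈ E →
      Complex.abs (A.eval (r:ℂ)) ≤ C * Complex.abs (B.eval (r:ℂ)) := by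
  have key : ∀ K : Set ℝ, IsCompact K → (∀ r ∈ K, B.eval (r:ℂ) ≠ 0) →
      ∃ C : ℝ, 0 ≤ C ∧ ∀ r ∈ K,
        Complex.abs (A.eval (r:ℂ)) ≤ C * Complex.abs (B.eval (r:ℂ)) := by
    intro K hK hKB
    have hcontA : Continuous fun r : ℝ => Complex.abs (A.eval (r:ℂ)) :=
      Complex.continuous_abs.comp ((A.continuous_aeval).comp Complex.continuous_ofReal)
    have hcontB : Continuous fun r : ℝ => Complex.abs (B.eval (r:ℂ)) :=
      Complex.continuous_abs.comp ((B.continuous_aeval).comp Complex.continuous_ofReal)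
    have hcont : ContinuousOn
        (fun r : ℝ => Complex.abs (A.eval (r:ℂ)) / Complex.abs (B.eval (r:ℂ))) K := by
      apply ContinuousOn.div hcontA.continuousOn hcontB.continuousOn
      intro r hr
      exact Complex.abs.ne_zero (hKB r hr)
    obtain ⟨C, hC⟩ := hK.exists_bound_of_continuousOn hcont
    refine ⟨max C 0, le_max_right _ _, ?_⟩
    intro r hr
    have h1 : Complex.abs (A.eval (r:ℂ)) / Complex.abs (B.eval (r:ℂ)) ≤ max C 0 := by
      have := hC r hr
      have h2 : Complex.abs (A.eval (r:ℂ)) / Complex.abs (B.eval (r:ℂ))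
          ≤ ‖Complex.abs (A.eval (r:ℂ)) / Complex.abs (B.eval (r:ℂ))‖ := le_abs_self _
      exact le_trans (h2.trans this) (le_max_left _ _)
    have hBpos : 0 < Complex.abs (B.eval (r:ℂ)) :=
      (Complex.abs.pos_iff).2 (hKB r hr)
    rwa [div_le_iff₀ hBpos] at h1
  by_cases hinf : (none : RLine) ∈ E
  · obtain ⟨R, CL, hR1, hCL, hlow⟩ := abs_eval_lower B hB
    obtain ⟨S, hS0, hup⟩ := abs_eval_le A B.natDegree (hdeg hinf)
    have hKcomp : IsCompact ({r : ℝ | (Option.some r : RLine) ∈ E} ∩ Set.Icc (-R) R) :=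
      isCompact_Icc.inter_left (closed_Er hEcl)
    obtain ⟨C1, hC10, hC1⟩ := key _ hKcomp (fun r hr => hBne r hr.1)
    refine ⟨max C1 (S / CL), le_trans hC10 (le_max_left _ _), ?_⟩
    intro r hr
    have hBpos : 0 ≤ Complex.abs (B.eval (r:ℂ)) := AbsoluteValue.nonneg _ _
    by_cases hrR : |r| ≤ R
    · have hmem : r ∈ {r : ℝ | (Option.some r : RLine) ∈ E} ∩ Set.Icc (-R) R :=
        ⟨hr, abs_le.1 hrR⟩
      exact le_trans (hC1 r hmem) (mul_le_mul_of_nonneg_right (le_max_left _ _) hBpos)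
    · have hxR : R ≤ |r| := le_of_not_ge hrR
      have h1 := hup r (le_trans hR1 hxR)
      have h2 := hlow r hxR
      have h3 : S * |r| ^ B.natDegree ≤ (S / CL) * Complex.abs (B.eval (r:ℂ)) := by
        have h4 : (S / CL) * (CL * |r| ^ B.natDegree) = S * |r| ^ B.natDegree := by
          field_simp
        calc S * |r| ^ B.natDegree = (S / CL) * (CL * |r| ^ B.natDegree) := h4.symm
          _ ≤ (S / CL) * Complex.abs (B.eval (r:ℂ)) :=
              mul_le_mul_of_nonneg_left h2 (by positivity)
      calc Complex.abs (A.eval (r:ℂ)) ≤ S * |r| ^ B.natDegree := h1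
        _ ≤ (S / CL) * Complex.abs (B.eval (r:ℂ)) := h3
        _ ≤ max C1 (S / CL) * Complex.abs (B.eval (r:ℂ)) :=
            mul_le_mul_of_nonneg_right (le_max_right _ _) hBpos
  · have hEcomp : IsCompact E := hEcl.isCompact
    have hsub : E ⊆ Set.range ((↑) : ℝ → OnePoint ℝ) := by
      intro x hx
      cases x with
      | none => exact absurd hx hinf
      | some r => exact ⟨r, rfl⟩
    have hKcomp : IsCompact {r : ℝ | (Option.some r : RLine) ∈ E} :=
      (OnePoint.isOpenEmbedding_coe (X := ℝ)).toIsEmbedding.toIsInducing.isCompact_preimage'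
        hEcomp hsub
    obtain ⟨C, hC0, hC⟩ := key _ hKcomp (fun r hr => hBne r hr)
    exact ⟨C, hC0, hC⟩

end ExtremalProof
namespace ExtremalProof

section Perturb
variable {n : ℕ} {E : Set RLine} {c : Fin n → RLine}

lemma qp_eval_ne (hc : ∀ k, c k ∉ E) {r : ℝ} (hr : (Option.some r : RLine) ∈ E) :
    (qp c).eval (r:ℂ) ≠ 0 := by
  rw [qp, Polynomial.eval_prod, Finset.prod_ne_zero_iff]
  intro k _
  cases hk : c k with
  | none =>
    have h1 : lin (none : RLine) = 1 := rfl
    rw [h1]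
    simp
  | some s =>
    have h1 : lin (Option.some s : RLine) = Polynomial.X - Polynomial.C (s:ℂ) := rfl
    rw [h1]
    simp only [Polynomial.eval_sub, Polynomial.eval_X, Polynomial.eval_C]
    rw [sub_ne_zero]
    intro h2
    have : r = s := by exact_mod_cast h2
    subst this
    exact hc k (hk ▸ hr)

lemma ninf_zero (hc : ∀ k, c k ∉ E) (hinfE : (none : RLine) ∈ E) : polesDiv c none = 0 := by
  unfold polesDiv
  rw [Finset.card_eq_zero, Finset.filter_eq_empty_iff]
  intro k _
  rw [embR_eq_none]
  intro h
  exact hc k (h ▸ hinfE)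

lemma evalPt_RF_some {a b : PC} {r : ℝ} (hb : b ≠ 0) (hz : b.eval (r:ℂ) ≠ 0) :
    evalPt (RF a b) (Option.some r) = a.eval (r:ℂ) / b.eval (r:ℂ) := by
  unfold evalPt
  have h1 : embR (Option.some r) = Option.some ((r:ℂ)) := rfl
  rw [h1, evalSph_RF_some hb hz]
  rfl

lemma evalPt_RF_none {a b : PC} (hb : b ≠ 0) (hab : a.natDegree ≤ b.natDegree) :
    evalPt (RF a b) none = a.coeff b.natDegree / b.leadingCoeff := by
  unfold evalPt
  have h1 : embR none = none := rfl
  rw [h1, evalSph_RF_none hb hab]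
  rfl

set_option maxHeartbeats 1000000 in
lemma perturb (hEcl : IsClosed E) (hc : ∀ k, c k ∉ E)
    {F : RatFunc ℂ} (hUB : UnitBdd E F)
    {β ξ M w : PC} (hβ0 : β ≠ 0) (hqβ : qp c = F.denom * β)
    (hFrep : F = RF (F.num * β) (qp c)) (hdegpβ : (F.num * β).natDegree ≤ n)
    (hN : F.num * F.num.map (starRingEnd ℂ) - F.denom * F.denom = ξ * M)
    (hN0 : F.num * F.num.map (starRingEnd ℂ) - F.denom * F.denom ≠ 0)
    (hqFreal : rpoly F.denom)
    (hξne : ∀ r : ℝ, (Option.some r : RLine) ∈ E → ξ.eval (r:ℂ) ≠ 0)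
    (hMw : (M * w).natDegree ≤ n)
    (hdeg1 : (none : RLine) ∈ E → (F.num * w * F.denom).natDegree ≤ (ξ * qp c).natDegree)
    (hdeg2 : (none : RLine) ∈ E →
      (M * (w * w) * (F.denom * F.denom)).natDegree ≤ (ξ * (qp c * qp c)).natDegree)
    (hcoef : (none : RLine) ∈ E → Complex.abs ((F.num * β).coeff n) = 1 → (M * w).coeff n = 0) :
    ∃ t₀ : ℝ, 0 < t₀ ∧ ∀ σ : ℂ, Complex.abs σ ≤ t₀ →
      MemL c (RF (F.num * β + Polynomial.C σ * (M * w)) (qp c)) ∧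
      UnitBdd E (RF (F.num * β + Polynomial.C σ * (M * w)) (qp c)) := by
  classical
  set p := F.num with hp
  set qF := F.denom with hqF
  have hqFne : qF ≠ 0 := RatFunc.denom_ne_zero F
  have hξ0 : ξ ≠ 0 := by
    intro h; exact hN0 (by rw [hN, h, zero_mul])
  have hM0 : M ≠ 0 := by
    intro h; exact hN0 (by rw [hN, h, mul_zero])
  -- degree bound for the perturbed numerator
  have hdegh : ∀ σ : ℂ, (p * β + Polynomial.C σ * (M * w)).natDegree ≤ n := by
    intro σ
    refine le_trans (Polynomial.natDegree_add_le _ _) ?_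
    rw [max_le_iff]
    exact ⟨hdegpβ, le_trans (Polynomial.natDegree_C_mul_le _ _) hMw⟩
  -- the two sup bounds
  obtain ⟨C1, hC10, hC1⟩ := bdd_on_E hEcl (p * w * qF) (ξ * qp c)
    (mul_ne_zero hξ0 (qp_ne c))
    (fun r hr => by
      rw [Polynomial.eval_mul]
      exact mul_ne_zero (hξne r hr) (qp_eval_ne hc hr))
    hdeg1
  obtain ⟨C2, hC20, hC2⟩ := bdd_on_E hEcl (M * (w * w) * (qF * qF)) (ξ * (qp c * qp c))
    (mul_ne_zero hξ0 (mul_ne_zero (qp_ne c) (qp_ne c)))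
    (fun r hr => by
      rw [Polynomial.eval_mul, Polynomial.eval_mul]
      exact mul_ne_zero (hξne r hr)
        (mul_ne_zero (qp_eval_ne hc hr) (qp_eval_ne hc hr)))
    hdeg2
  -- bound at the point at infinity
  have hinfbound : ∃ t : ℝ, 0 < t ∧ ∀ σ : ℂ, Complex.abs σ ≤ t →
      (none : RLine) ∈ E →
      Complex.abs (evalPt (RF (p * β + Polynomial.C σ * (M * w)) (qp c)) none) ≤ 1 := by
    by_cases hinfE : (none : RLine) ∈ E
    · have hdqp : (qp c).natDegree = n := by
        have := qp_natDegree c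
        rw [ninf_zero hc hinfE] at this
        omega
      have hlcqp : (qp c).leadingCoeff = 1 := qp_monic c
      have hvF : Complex.abs ((p * β).coeff n) ≤ 1 := by
        have h1 : Complex.abs (evalPt F none) ≤ 1 := hUB none hinfE
        rw [hFrep] at h1
        rwa [evalPt_RF_none (qp_ne c) (by rw [hdqp]; exact hdegpβ), hlcqp, div_one, hdqp] at h1
      have heval : ∀ σ : ℂ,
          evalPt (RF (p * β + Polynomial.C σ * (M * w)) (qp c)) none
            = (p * β).coeff n + σ * (M * w).coeff n := by
        intro σ
        rw [evalPt_RF_none (qp_ne c) (by rw [hdqp]; exact hdegh σ), hlcqp, div_one, hdqp,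
          Polynomial.coeff_add, Polynomial.coeff_C_mul]
      rcases eq_or_lt_of_le hvF with habs1 | habslt
      · refine ⟨1, one_pos, ?_⟩
        intro σ _ _
        rw [heval σ, hcoef hinfE habs1, mul_zero, add_zero]
        exact le_of_eq habs1
      · refine ⟨(1 - Complex.abs ((p * β).coeff n)) / (Complex.abs ((M * w).coeff n) + 1),
          div_pos (by linarith) (by positivity), ?_⟩
        intro σ hσ _
        rw [heval σ]
        refine le_trans (Complex.abs.add_le _ _) ?_
        rw [map_mul]
        have h2 : Complex.abs σ * Complex.abs ((M * w).coeff n)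
            ≤ 1 - Complex.abs ((p * β).coeff n) := by
          have h3 : Complex.abs σ * Complex.abs ((M * w).coeff n)
              ≤ ((1 - Complex.abs ((p * β).coeff n)) / (Complex.abs ((M * w).coeff n) + 1))
                * (Complex.abs ((M * w).coeff n) + 1) := by
            apply mul_le_mul hσ (by linarith) (AbsoluteValue.nonneg _ _)
              (div_nonneg (by linarith) (by positivity))
          rwa [div_mul_cancel₀ _ (by positivity)] at h3
        linarith
    · exact ⟨1, one_pos, fun σ _ h => absurd h hinfE⟩
  obtain ⟨tinf, htinf0, htinf⟩ := hinfbound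
  refine ⟨min tinf (1 / (2 * C1 + C2 + 1)), lt_min htinf0 (by positivity), ?_⟩
  intro σ hσ
  have hσinf : Complex.abs σ ≤ tinf := le_trans hσ (min_le_left _ _)
  have hσ1 : Complex.abs σ ≤ 1 := by
    refine le_trans (le_trans hσ (min_le_right _ _)) ?_
    rw [div_le_one (by positivity)]
    linarith
  have hσ2 : Complex.abs σ * (2 * C1 + C2) ≤ 1 := by
    have h1 : Complex.abs σ * (2 * C1 + C2) ≤ (1 / (2 * C1 + C2 + 1)) * (2 * C1 + C2) := by
      apply mul_le_mul_of_nonneg_right (le_trans hσ (min_le_right _ _)) (by positivity)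
    refine le_trans h1 ?_
    rw [div_mul_eq_mul_div, one_mul, div_le_one (by positivity)]
    linarith
  constructor
  · exact memL_RF c _ (hdegh σ)
  · -- UnitBdd
    intro x hx
    cases x with
    | none => exact htinf σ hσinf hx
    | some r =>
      set z : ℂ := (r : ℂ) with hz
      have hqpz : (qp c).eval z ≠ 0 := qp_eval_ne hc hx
      have hqβz : (qp c).eval z = qF.eval z * β.eval z := by rw [hqβ, Polynomial.eval_mul]
      have hqFz : qF.eval z ≠ 0 := fun h => hqpz (by rw [hqβz, h, zero_mul])
      have hβz : β.eval z ≠ 0 := fun h => hqpz (by rw [hqβz, h, mul_zero])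
      -- real quantities
      set ap := Complex.abs (p.eval z) with hap
      set aβ := Complex.abs (β.eval z) with haβ
      set aqF := Complex.abs (qF.eval z) with haqF
      set aξ := Complex.abs (ξ.eval z) with haξ
      set aM := Complex.abs (M.eval z) with haM
      set aw := Complex.abs (w.eval z) with haw
      set aσ := Complex.abs σ with haσ
      have haβpos : 0 < aβ := Complex.abs.pos hβz
      have haqFpos : 0 < aqF := Complex.abs.pos hqFz
      -- |F| ≤ 1 at z
      have hap_le : ap ≤ aqF := by
        have h1 : Complex.abs (evalPt F (Option.some r)) ≤ 1 := hUB (Option.some r) hx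
        rw [hFrep, evalPt_RF_some (qp_ne c) hqpz] at h1
        rw [map_div₀, Polynomial.eval_mul, map_mul, hqβz, map_mul] at h1
        rw [div_le_one (by positivity)] at h1
        exact le_of_mul_le_mul_right h1 haβpos
      -- the key identity |N(z)| = aqF^2 - ap^2
      have hqFconj : starRingEnd ℂ (qF.eval z) = qF.eval z := rpoly_eval_real hqFreal r
      have hptz : (p.map (starRingEnd ℂ)).eval z = starRingEnd ℂ (p.eval z) := by
        rw [conj_eval p z, hz, Complex.conj_ofReal]
      have hNz : (ξ * M).eval z
          = (((Complex.normSq (p.eval z) - Complex.normSq (qF.eval z) : ℝ)) : ℂ) := by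
        rw [← hN]
        rw [Polynomial.eval_sub, Polynomial.eval_mul, Polynomial.eval_mul, hptz]
        rw [Complex.mul_conj]
        have h2 : qF.eval z * qF.eval z = ((Complex.normSq (qF.eval z) : ℝ) : ℂ) := by
          conv_lhs => rw [show qF.eval z * qF.eval z
            = qF.eval z * starRingEnd ℂ (qF.eval z) by rw [hqFconj]]
          rw [Complex.mul_conj]
        rw [h2]
        push_cast
        ring
      have hnp : Complex.normSq (p.eval z) = ap^2 := (Complex.sq_abs _).symm
      have hnqF : Complex.normSq (qF.eval z) = aqF^2 := (Complex.sq_abs _).symm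
      have haN : aξ * aM = aqF^2 - ap^2 := by
        have h1 : Complex.abs ((ξ * M).eval z) = aξ * aM := by
          rw [Polynomial.eval_mul, map_mul]
        have h4 : Complex.normSq (p.eval z) - Complex.normSq (qF.eval z) ≤ 0 := by
          rw [hnp, hnqF]
          nlinarith [hap_le, AbsoluteValue.nonneg Complex.abs (p.eval z)]
        rw [← h1, hNz, Complex.abs_ofReal, abs_of_nonpos h4, hnp, hnqF]
        ring
      -- the sup bounds at z
      have h5 : ap * aw ≤ C1 * (aξ * aβ) := by
        have h1 := hC1 r hx
        rw [← hz] at h1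
        simp only [Polynomial.eval_mul, map_mul, hqβz] at h1
        refine le_of_mul_le_mul_right ?_ haqFpos
        show (ap * aw) * aqF ≤ C1 * (aξ * aβ) * aqF
        nlinarith [h1]
      have h6 : aM * (aw * aw) ≤ C2 * (aξ * (aβ * aβ)) := by
        have h1 := hC2 r hx
        rw [← hz] at h1
        simp only [Polynomial.eval_mul, map_mul, hqβz] at h1
        refine le_of_mul_le_mul_right ?_ (show (0:ℝ) < aqF * aqF by positivity)
        show (aM * (aw * aw)) * (aqF * aqF) ≤ C2 * (aξ * (aβ * aβ)) * (aqF * aqF)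
        nlinarith [h1]
      -- evaluate the perturbed function
      rw [Complex.norm_eq_abs, evalPt_RF_some (qp_ne c) hqpz, map_div₀]
      rw [div_le_one (Complex.abs.pos hqpz)]
      -- reduce to squares
      have hsq : (Complex.abs ((p * β + Polynomial.C σ * (M * w)).eval z))^2
          ≤ (Complex.abs ((qp c).eval z))^2 → Complex.abs ((p * β + Polynomial.C σ * (M * w)).eval z)
          ≤ Complex.abs ((qp c).eval z) := by
        intro h
        nlinarith [AbsoluteValue.nonneg Complex.abs ((p * β + Polynomial.C σ * (M * w)).eval z),
          AbsoluteValue.nonneg Complex.abs ((qp c).eval z)]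
      apply hsq
      -- expand
      have hB : (Polynomial.C σ * (M * w)).eval z = σ * (M.eval z * w.eval z) := by
        rw [Polynomial.eval_mul, Polynomial.eval_C, Polynomial.eval_mul]
      have hexp : (Complex.abs ((p * β + Polynomial.C σ * (M * w)).eval z))^2
          = (ap * aβ)^2 + (aσ * (aM * aw))^2
            + 2 * ((p.eval z * β.eval z) * (starRingEnd ℂ (σ * (M.eval z * w.eval z)))).re := by
        rw [Polynomial.eval_add, Polynomial.eval_mul, hB, Complex.sq_abs, Complex.normSq_add]
        rw [← Complex.sq_abs, ← Complex.sq_abs, map_mul, map_mul, map_mul]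
      rw [hexp]
      have hmid : ((p.eval z * β.eval z) * (starRingEnd ℂ (σ * (M.eval z * w.eval z)))).re
          ≤ (ap * aβ) * (aσ * (aM * aw)) := by
        refine le_trans (Complex.re_le_abs _) (le_of_eq ?_)
        rw [map_mul, Complex.abs_conj, map_mul, map_mul, map_mul]
      have hqpabs : (Complex.abs ((qp c).eval z))^2 = (aqF * aβ)^2 := by
        rw [hqβz, map_mul]
      rw [hqpabs]
      -- final arithmetic
      have k1 : 2 * aσ * aM * aβ * (ap * aw) ≤ 2 * aσ * aM * aβ * (C1 * (aξ * aβ)) :=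
        mul_le_mul_of_nonneg_left h5 (by positivity)
      have k2 : aσ^2 * aM * (aM * (aw * aw)) ≤ aσ^2 * aM * (C2 * (aξ * (aβ * aβ))) :=
        mul_le_mul_of_nonneg_left h6 (by positivity)
      have k4a : aσ^2 ≤ aσ := by nlinarith [AbsoluteValue.nonneg Complex.abs σ]
      have k4 : aσ^2 * (C2 * (aξ * aM * aβ^2)) ≤ aσ * (C2 * (aξ * aM * aβ^2)) :=
        mul_le_mul_of_nonneg_right k4a (by positivity)
      have k3 : aσ * (2 * C1 + C2) * (aβ^2 * (aξ * aM)) ≤ 1 * (aβ^2 * (aξ * aM)) :=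
        mul_le_mul_of_nonneg_right hσ2 (by positivity)
      have k0 : aβ^2 * (aξ * aM) = aβ^2 * (aqF^2 - ap^2) := by rw [haN]
      linarith [hmid, k1, k2, k3, k4, k0]

end Perturb
end ExtremalProof
namespace ExtremalProof

lemma N_ne_zero {F : RatFunc ℂ} (hnc : ∀ a : ℂ, F ≠ RatFunc.C a) :
    F.num * F.num.map (starRingEnd ℂ) - F.denom * F.denom ≠ 0 := by
  intro h0
  have heq : F.num * F.num.map (starRingEnd ℂ) = F.denom * F.denom := sub_eq_zero.1 h0
  have hcop : IsCoprime F.num F.denom := F.isCoprime_num_denom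
  have hdvd1 : F.denom ∣ F.num * F.num.map (starRingEnd ℂ) := ⟨F.denom, heq⟩
  have hdvd2 : F.denom ∣ F.num.map (starRingEnd ℂ) := (hcop.symm).dvd_of_dvd_mul_left hdvd1
  obtain ⟨t, ht⟩ := hdvd2
  have heq2 : F.num * t = F.denom := by
    have h1 : F.denom * (F.num * t) = F.denom * F.denom := by
      rw [← heq, ht]; ring
    exact mul_left_cancel₀ (RatFunc.denom_ne_zero F) h1
  have hpu : IsUnit F.num := hcop.isUnit_of_dvd' (dvd_refl _) ⟨t, heq2.symm⟩
  obtain ⟨a, ha, hCa⟩ := Polynomial.isUnit_iff.1 hpu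
  have hnum0 : F.num ≠ 0 := hpu.ne_zero
  have hden0 : F.denom.natDegree = 0 := by
    have h1 : F.num.natDegree = 0 := by rw [← hCa]; exact Polynomial.natDegree_C a
    have h2 : (F.num.map (starRingEnd ℂ)).natDegree = 0 := by
      rw [Polynomial.natDegree_map_eq_of_injective (RingHom.injective _)]; exact h1
    have h3 := congrArg Polynomial.natDegree heq
    rw [Polynomial.natDegree_mul hnum0 (Polynomial.map_ne_zero hnum0),
      Polynomial.natDegree_mul (RatFunc.denom_ne_zero F) (RatFunc.denom_ne_zero F),
      h1, h2] at h3
    omega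
  have hden1 : F.denom = 1 := by
    have hm := RatFunc.monic_denom F
    have h1 : F.denom = Polynomial.C (F.denom.coeff 0) :=
      Polynomial.eq_C_of_natDegree_eq_zero hden0
    have h2 : F.denom.coeff 0 = 1 := by
      have h3 : F.denom.coeff 0 = F.denom.leadingCoeff := by
        rw [Polynomial.leadingCoeff, hden0]
      rw [h3, hm]
    rw [h1, h2, map_one]
  apply hnc a
  have h4 : F = RF F.num F.denom := (RF_num_denom F).symm
  rw [h4, hden1, ← hCa, RF, map_one, div_one, RatFunc.algebraMap_C]

section LV
variable {n : ℕ} (c : Fin n → RLine)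

lemma leadVal_some (h : PC) (r0 : ℝ) :
    leadVal (RF h (qp c)) (Option.some r0) (polesDiv c (embR (Option.some r0)))
      = ((-1:ℂ))^((qp c).rootMultiplicity ((r0:ℂ))) * h.eval ((r0:ℂ))
        / ((qp c) /ₘ (Polynomial.X - Polynomial.C ((r0:ℂ)))
            ^ ((qp c).rootMultiplicity ((r0:ℂ)))).eval ((r0:ℂ)) := by
  have hd : polesDiv c (embR (Option.some r0)) = (qp c).rootMultiplicity ((r0:ℂ)) := by
    rw [embR_some, rm_qp]
  rw [hd]
  have hred : ∀ d : ℕ, leadVal (RF h (qp c)) (Option.some r0) d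
      = (evalSph (RF h (qp c) * (RatFunc.C ((r0:ℝ):ℂ) - RatFunc.X)^d)
          (Option.some ((r0:ℝ):ℂ))).getD 0 := fun d => rfl
  rw [hred]
  have halg : (RatFunc.C ((r0:ℝ):ℂ) - RatFunc.X)
      = algebraMap PC (RatFunc ℂ) (Polynomial.C ((r0:ℂ)) - Polynomial.X) := by
    rw [map_sub, RatFunc.algebraMap_C, RatFunc.algebraMap_X]
  rw [halg, ← map_pow, RF_mul_poly]
  set d := (qp c).rootMultiplicity ((r0:ℂ)) with hd_def
  set q2 := (qp c) /ₘ (Polynomial.X - Polynomial.C ((r0:ℂ))) ^ d with hq2_def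
  have hq2z : q2.eval ((r0:ℂ)) ≠ 0 := by
    rw [hq2_def, hd_def]
    exact Polynomial.eval_divByMonic_pow_rootMultiplicity_ne_zero _ (qp_ne c)
  have hq20 : q2 ≠ 0 := by
    intro hq
    rw [hq] at hq2z
    simp at hq2z
  have hfact' : qp c = q2 * (Polynomial.X - Polynomial.C ((r0:ℂ))) ^ d := by
    rw [mul_comm, hq2_def, hd_def]
    exact (Polynomial.pow_mul_divByMonic_rootMultiplicity_eq (qp c) ((r0:ℂ))).symm
  have hnum : h * (Polynomial.C ((r0:ℂ)) - Polynomial.X) ^ d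
      = (h * (-1 : PC)^d) * (Polynomial.X - Polynomial.C ((r0:ℂ))) ^ d := by
    rw [show (Polynomial.C ((r0:ℂ)) - Polynomial.X)
      = -(Polynomial.X - Polynomial.C ((r0:ℂ))) from by ring, neg_pow]
    ring
  have ht0 : (Polynomial.X - Polynomial.C ((r0:ℂ))) ^ d ≠ 0 :=
    pow_ne_zero _ (Polynomial.X_sub_C_ne_zero _)
  rw [hnum, hfact', RF_cancel _ ht0, evalSph_RF_some hq20 hq2z]
  show (h * (-1 : PC)^d).eval ((r0:ℂ)) / q2.eval ((r0:ℂ)) = _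
  simp only [Polynomial.eval_mul, Polynomial.eval_pow, Polynomial.eval_neg, Polynomial.eval_one]
  ring

lemma leadVal_none (h : PC) (hdeg : h.natDegree ≤ n) :
    leadVal (RF h (qp c)) none (polesDiv c (embR none)) = h.coeff n := by
  have hred : ∀ d : ℕ, leadVal (RF h (qp c)) none d
      = (evalSph (RF h (qp c) / RatFunc.X ^ d) none).getD 0 := fun d => rfl
  have hembR : embR none = none := rfl
  rw [hembR, hred]
  rw [show (RatFunc.X : RatFunc ℂ) = algebraMap PC (RatFunc ℂ) Polynomial.X from
    (RatFunc.algebraMap_X).symm, ← map_pow, RF_div_poly]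
  set d := polesDiv c none with hd_def
  have hb0 : qp c * Polynomial.X ^ d ≠ 0 :=
    mul_ne_zero (qp_ne c) (pow_ne_zero _ Polynomial.X_ne_zero)
  have hdegb : (qp c * Polynomial.X ^ d).natDegree = n := by
    rw [Polynomial.natDegree_mul (qp_ne c) (pow_ne_zero _ Polynomial.X_ne_zero),
      Polynomial.natDegree_pow, Polynomial.natDegree_X, mul_one]
    have := qp_natDegree c
    omega
  rw [evalSph_RF_none hb0 (by rw [hdegb]; exact hdeg)]
  have hlc : (qp c * Polynomial.X ^ d).leadingCoeff = 1 :=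
    (qp_monic c).mul (Polynomial.monic_X_pow d)
  show h.coeff ((qp c * Polynomial.X ^ d).natDegree) / (qp c * Polynomial.X ^ d).leadingCoeff = _
  rw [hdegb, hlc, div_one]

end LV
end ExtremalProof
open ExtremalProof in
set_option maxHeartbeats 1600000 in
/-- If the extremal function is nonconstant, then its degree as a rational map
is at least `⌈(n+1)/2⌉`. -/
theorem extremal_degree_lower_bound
    {n : ℕ} (E : Set RLine) (hEcl : IsClosed E) (hEinf : E.Infinite)
    (c : Fin n → RLine) (hc : ∀ k, c k ∉ E)
    (xs : RLine) (hxs : xs ∉ E)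
    (F : RatFunc ℂ) (hF : IsExtremal E c xs F) (hnc : ∀ a : ℂ, F ≠ RatFunc.C a) :
    (n + 2) / 2 ≤ max F.num.natDegree F.denom.natDegree := by
  classical
  by_contra hcon
  push_neg at hcon
  set D := max F.num.natDegree F.denom.natDegree with hDdef
  have h2D : 2 * D ≤ n := by omega
  have hpD : F.num.natDegree ≤ D := le_max_left _ _
  have hqD : F.denom.natDegree ≤ D := le_max_right _ _
  obtain ⟨hMem, hUB, hExt⟩ := hF
  obtain ⟨β, hβ0, hqβ, hFrep, hdegpβ⟩ := rep_of_memL c hMem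
  have hqFreal : rpoly F.denom :=
    rpoly_of_monic_dvd_qp c (RatFunc.monic_denom F) (denom_dvd_qp c hMem)
  set N := F.num * F.num.map (starRingEnd ℂ) - F.denom * F.denom with hNdef
  have hN0 : N ≠ 0 := N_ne_zero hnc
  have hdegpt : (F.num.map (starRingEnd ℂ)).natDegree = F.num.natDegree :=
    Polynomial.natDegree_map_eq_of_injective (RingHom.injective _) _
  have hdegN : N.natDegree ≤ 2 * D := by
    rw [hNdef]
    refine le_trans (Polynomial.natDegree_sub_le _ _) ?_
    rw [max_le_iff]
    constructor
    · refine le_trans Polynomial.natDegree_mul_le ?_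
      rw [hdegpt]; omega
    · exact le_trans Polynomial.natDegree_mul_le (by omega)
  cases xs with
  | some r0 =>
    set z0 : ℂ := ((r0 : ℝ) : ℂ) with hz0
    set j := N.rootMultiplicity z0 with hjdef
    set ξ := (Polynomial.X - Polynomial.C z0) ^ j with hξdef
    set M := N /ₘ ξ with hMdef
    have hNM : N = ξ * M := by
      rw [hξdef, hMdef, hjdef]
      exact (Polynomial.pow_mul_divByMonic_rootMultiplicity_eq N z0).symm
    have hMz0 : M.eval z0 ≠ 0 := by
      rw [hMdef, hξdef, hjdef]
      exact Polynomial.eval_divByMonic_pow_rootMultiplicity_ne_zero _ hN0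
    have hM0 : M ≠ 0 := fun hq => hMz0 (by rw [hq]; simp)
    have hξ0 : ξ ≠ 0 := pow_ne_zero _ (Polynomial.X_sub_C_ne_zero _)
    have hdegξ : ξ.natDegree = j := by
      rw [hξdef, Polynomial.natDegree_pow, Polynomial.natDegree_X_sub_C, mul_one]
    have hdegNM : N.natDegree = j + M.natDegree := by
      have h := congrArg Polynomial.natDegree hNM
      rwa [Polynomial.natDegree_mul hξ0 hM0, hdegξ] at h
    have hξne : ∀ r : ℝ, (Option.some r : RLine) ∈ E → ξ.eval ((r:ℂ)) ≠ 0 := by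
      intro r hr
      rw [hξdef]
      simp only [Polynomial.eval_pow, Polynomial.eval_sub, Polynomial.eval_X, Polynomial.eval_C]
      apply pow_ne_zero
      rw [sub_ne_zero, hz0]
      intro hrr
      have hre : r = r0 := by exact_mod_cast hrr
      exact hxs (hre ▸ hr)
    have hcoef : (none : RLine) ∈ E → Complex.abs ((F.num * β).coeff n) = 1 →
        (M * 1).coeff n = 0 := by
      intro hinfE hab1
      rw [mul_one]
      have hqpdeg : (qp c).natDegree = n := by
        have h1 := qp_natDegree c
        rw [ninf_zero hc hinfE] at h1
        omega
      have hpβne : (F.num * β).coeff n ≠ 0 := by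
        intro h; rw [h] at hab1; simp at hab1
      have hge : n ≤ (F.num * β).natDegree := Polynomial.le_natDegree_of_ne_zero hpβne
      have hdegeq : (F.num * β).natDegree = n := le_antisymm hdegpβ hge
      have hp0 : F.num ≠ 0 := by
        intro h; exact hpβne (by rw [h, zero_mul, Polynomial.coeff_zero])
      have hmul : F.num.natDegree + β.natDegree = n := by
        rw [← Polynomial.natDegree_mul hp0 hβ0]; exact hdegeq
      have hqmul : F.denom.natDegree + β.natDegree = n := by
        have h1 := congrArg Polynomial.natDegree hqβ
        rw [Polynomial.natDegree_mul (RatFunc.denom_ne_zero F) hβ0, hqpdeg] at h1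
        omega
      have hm : F.num.natDegree = F.denom.natDegree := by omega
      have hlcβ : β.leadingCoeff = 1 := by
        have h1 := congrArg Polynomial.leadingCoeff hqβ
        rw [Polynomial.leadingCoeff_mul, (qp_monic c).leadingCoeff,
          (RatFunc.monic_denom F).leadingCoeff, one_mul] at h1
        exact h1.symm
      have hcoeff_lc : (F.num * β).coeff n = F.num.leadingCoeff := by
        calc (F.num * β).coeff n = (F.num * β).leadingCoeff := by rw [← hdegeq]; rfl
          _ = F.num.leadingCoeff * β.leadingCoeff := Polynomial.leadingCoeff_mul _ _
          _ = F.num.leadingCoeff := by rw [hlcβ, mul_one]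
      have hablc : Complex.abs F.num.leadingCoeff = 1 := by
        rw [← hcoeff_lc]; exact hab1
      have hc1 : (F.num * F.num.map (starRingEnd ℂ)).coeff
          (F.num.natDegree + F.num.natDegree)
          = F.num.leadingCoeff * starRingEnd ℂ F.num.leadingCoeff := by
        have h1 := Polynomial.coeff_mul_degree_add_degree F.num (F.num.map (starRingEnd ℂ))
        rw [hdegpt] at h1
        rw [h1]
        congr 1
        rw [Polynomial.leadingCoeff, hdegpt, Polynomial.coeff_map]
        rfl
      have hc2 : (F.denom * F.denom).coeff (F.num.natDegree + F.num.natDegree) = 1 := by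
        have h1 := Polynomial.coeff_mul_degree_add_degree F.denom F.denom
        rw [← hm] at h1
        rw [h1, (RatFunc.monic_denom F).leadingCoeff, one_mul]
      have hcN : N.coeff (F.num.natDegree + F.num.natDegree) = 0 := by
        rw [hNdef, Polynomial.coeff_sub, hc1, hc2]
        have h1 : F.num.leadingCoeff * starRingEnd ℂ F.num.leadingCoeff = 1 := by
          rw [Complex.mul_conj, Complex.normSq_eq_abs, hablc]
          norm_num
        rw [h1, sub_self]
      have hdegN2m : N.natDegree ≤ F.num.natDegree + F.num.natDegree := by
        rw [hNdef]
        refine le_trans (Polynomial.natDegree_sub_le _ _) ?_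
        rw [max_le_iff]
        constructor
        · exact le_trans Polynomial.natDegree_mul_le (by rw [hdegpt])
        · exact le_trans Polynomial.natDegree_mul_le (by omega)
      have hNne2m : N.natDegree ≠ F.num.natDegree + F.num.natDegree := by
        intro hq
        have h1 : N.leadingCoeff = 0 := by rw [Polynomial.leadingCoeff, hq]; exact hcN
        exact hN0 (Polynomial.leadingCoeff_eq_zero.1 h1)
      apply Polynomial.coeff_eq_zero_of_natDegree_lt
      omega
    obtain ⟨t₀, ht₀, hpert⟩ := perturb (w := 1) hEcl hc hUB hβ0 hqβ hFrep hdegpβ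
      (by rw [← hNdef]; exact hNM) (by rw [← hNdef]; exact hN0) hqFreal hξne
      (by rw [mul_one]; omega)
      (by
        intro hinfE
        have hqpdeg : (qp c).natDegree = n := by
          have h1 := qp_natDegree c
          rw [ninf_zero hc hinfE] at h1
          omega
        have hrhs : (ξ * qp c).natDegree = j + n := by
          rw [Polynomial.natDegree_mul hξ0 (qp_ne c), hdegξ, hqpdeg]
        rw [hrhs]
        refine le_trans Polynomial.natDegree_mul_le ?_
        have h2 : (F.num * (1:PC)).natDegree ≤ F.num.natDegree :=
          le_trans Polynomial.natDegree_mul_le (by simp)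
        omega)
      (by
        intro hinfE
        have hqpdeg : (qp c).natDegree = n := by
          have h1 := qp_natDegree c
          rw [ninf_zero hc hinfE] at h1
          omega
        have hrhs : (ξ * (qp c * qp c)).natDegree = j + (n + n) := by
          rw [Polynomial.natDegree_mul hξ0 (mul_ne_zero (qp_ne c) (qp_ne c)), hdegξ,
            Polynomial.natDegree_mul (qp_ne c) (qp_ne c), hqpdeg]
        rw [hrhs]
        refine le_trans Polynomial.natDegree_mul_le ?_
        have h2 : (M * ((1:PC) * 1)).natDegree ≤ M.natDegree :=
          le_trans Polynomial.natDegree_mul_le (by simp)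
        have h3 : (F.denom * F.denom).natDegree ≤ 2 * D :=
          le_trans Polynomial.natDegree_mul_le (by omega)
        omega)
      hcoef
    set q2 := (qp c) /ₘ (Polynomial.X - Polynomial.C z0) ^ ((qp c).rootMultiplicity z0)
      with hq2def
    have hq2z : q2.eval z0 ≠ 0 := by
      rw [hq2def]
      exact Polynomial.eval_divByMonic_pow_rootMultiplicity_ne_zero _ (qp_ne c)
    set μ := ((-1:ℂ))^((qp c).rootMultiplicity z0) * M.eval z0 / q2.eval z0 with hμdef
    have hμ0 : μ ≠ 0 :=
      div_ne_zero (mul_ne_zero (pow_ne_zero _ (by norm_num)) hMz0) hq2z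
    have haμ : (0:ℝ) ≤ Complex.abs μ := AbsoluteValue.nonneg _ _
    set σ := ((t₀ / (Complex.abs μ + 1) : ℝ) : ℂ) * starRingEnd ℂ μ with hσdef
    have hσabs : Complex.abs σ ≤ t₀ := by
      rw [hσdef, map_mul, Complex.abs_ofReal, Complex.abs_conj,
        abs_of_nonneg (by positivity)]
      rw [div_mul_eq_mul_div, div_le_iff₀ (by positivity)]
      nlinarith [ht₀]
    obtain ⟨hmemG, hubG⟩ := hpert σ hσabs
    have hcomp := hExt _ hmemG hubG
    have hLG := leadVal_some c (F.num * β + Polynomial.C σ * (M * 1)) r0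
    have hLF := leadVal_some c (F.num * β) r0
    rw [← hFrep] at hLF
    rw [hLG, hLF] at hcomp
    have hid : ((-1:ℂ))^((qp c).rootMultiplicity z0)
          * ((F.num * β + Polynomial.C σ * (M * 1)).eval z0) / q2.eval z0
        = ((-1:ℂ))^((qp c).rootMultiplicity z0) * ((F.num * β).eval z0) / q2.eval z0
          + σ * μ := by
      rw [hμdef]
      simp only [Polynomial.eval_add, Polynomial.eval_mul, Polynomial.eval_C,
        Polynomial.eval_one, mul_one]
      field_simp
    rw [hid, Complex.add_re] at hcomp
    have hσμ : (σ * μ).re > 0 := by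
      have h1 : σ * μ = ((t₀ / (Complex.abs μ + 1) : ℝ) : ℂ)
          * ((Complex.normSq μ : ℝ) : ℂ) := by
        rw [hσdef]
        rw [mul_assoc, show starRingEnd ℂ μ * μ = ((Complex.normSq μ : ℝ) : ℂ) from by
          rw [mul_comm, Complex.mul_conj]]
      rw [h1, ← Complex.ofReal_mul, Complex.ofReal_re]
      have h2 : 0 < Complex.normSq μ := Complex.normSq_pos.2 hμ0
      positivity
    linarith
  | none =>
    set e := n - N.natDegree with hedef
    have hdegNn : N.natDegree ≤ n := le_trans hdegN (by omega)
    have hXe : (Polynomial.X : PC) ^ e ≠ 0 := pow_ne_zero _ Polynomial.X_ne_zero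
    obtain ⟨t₀, ht₀, hpert⟩ := perturb (ξ := 1) (M := N) (w := Polynomial.X ^ e)
      hEcl hc hUB hβ0 hqβ hFrep hdegpβ
      (by rw [one_mul, ← hNdef]) (by rw [← hNdef]; exact hN0) hqFreal
      (fun r hr => by simp)
      (by
        rw [Polynomial.natDegree_mul hN0 hXe, Polynomial.natDegree_pow,
          Polynomial.natDegree_X, mul_one]
        omega)
      (fun hinfE => absurd hinfE hxs)
      (fun hinfE => absurd hinfE hxs)
      (fun hinfE => absurd hinfE hxs)
    set μ := (N * Polynomial.X ^ e).coeff n with hμdef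
    have hμval : μ = N.leadingCoeff := by
      have hn : n = N.natDegree + e := by omega
      rw [hμdef, hn, Polynomial.coeff_mul_X_pow]
      rfl
    have hμ0 : μ ≠ 0 := by
      rw [hμval]
      exact Polynomial.leadingCoeff_ne_zero.2 hN0
    have haμ : (0:ℝ) ≤ Complex.abs μ := AbsoluteValue.nonneg _ _
    set σ := ((t₀ / (Complex.abs μ + 1) : ℝ) : ℂ) * starRingEnd ℂ μ with hσdef
    have hσabs : Complex.abs σ ≤ t₀ := by
      rw [hσdef, map_mul, Complex.abs_ofReal, Complex.abs_conj,
        abs_of_nonneg (by positivity)]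
      rw [div_mul_eq_mul_div, div_le_iff₀ (by positivity)]
      nlinarith [ht₀]
    obtain ⟨hmemG, hubG⟩ := hpert σ hσabs
    have hcomp := hExt _ hmemG hubG
    have hdegh : (F.num * β + Polynomial.C σ * (N * Polynomial.X ^ e)).natDegree ≤ n := by
      refine le_trans (Polynomial.natDegree_add_le _ _) ?_
      rw [max_le_iff]
      refine ⟨hdegpβ, le_trans (Polynomial.natDegree_C_mul_le _ _) ?_⟩
      rw [Polynomial.natDegree_mul hN0 hXe, Polynomial.natDegree_pow,
        Polynomial.natDegree_X, mul_one]
      omega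
    have hLG := leadVal_none c (F.num * β + Polynomial.C σ * (N * Polynomial.X ^ e)) hdegh
    have hLF := leadVal_none c (F.num * β) hdegpβ
    rw [← hFrep] at hLF
    rw [hLG, hLF] at hcomp
    rw [Polynomial.coeff_add, Polynomial.coeff_C_mul, ← hμdef, Complex.add_re] at hcomp
    have hσμ : (σ * μ).re > 0 := by
      have h1 : σ * μ = ((t₀ / (Complex.abs μ + 1) : ℝ) : ℂ)
          * ((Complex.normSq μ : ℝ) : ℂ) := by
        rw [hσdef]
        rw [mul_assoc, show starRingEnd ℂ μ * μ = ((Complex.normSq μ : ℝ) : ℂ) from by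
          rw [mul_comm, Complex.mul_conj]]
      rw [h1, ← Complex.ofReal_mul, Complex.ofReal_re]
      have h2 : 0 < Complex.normSq μ := Complex.normSq_pos.2 hμ0
      positivity
    linarith

end
end
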